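/- arXiv:1607.07584 — 3 statements merged into one kernel-verified Lean document; each statement's English description precedes it below -/
import Mathlib

section
/- Suppose λ_k < α₁ < α₂ < λ_{k+1}, α₁ ≤ β₁, α₂ ≤ β₂, and m(α₁,β₁) = 0 = m(α₂,β₂). Then β₂ < β₁; that is, the curve α ↦ β(α) of zeros of m is strictly decreasing. Moreover, this curve is Lipschitz continuous on compact subsets of (λ_k, λ_{k+1}). -/
open MeasureTheory RealInnerProductSpace Filter Topology

/-- The functional `J_{α,β}(u) = ½(B(u,u) - α∫_Ω (u⁺)² - β∫_Ω (u⁻)²)`, where the Hilbert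
space `X₀` carries the Gagliardo-type inner product `B = ⟪·,·⟫` and `T : X₀ → L²(Ω)` is the
embedding into `L²(Ω)`; note `∫_Ω (u⁺)² = ‖(Tu)⁺‖²_{L²}`. -/
noncomputable def Jfun {Ω : Type*} [MeasurableSpace Ω] {μ : Measure Ω}
    {X₀ : Type*} [NormedAddCommGroup X₀] [InnerProductSpace ℝ X₀]
    (T : X₀ →ₗ[ℝ] Lp ℝ 2 μ) (α β : ℝ) (u : X₀) : ℝ :=
  (⟪u, u⟫ - α * ‖Lp.posPart (T u)‖ ^ 2 - β * ‖Lp.negPart (T u)‖ ^ 2) / 2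

section HelperLemmas


variable {α : Type*} [MeasurableSpace α] {μ : Measure α}

lemma myPosPart_lip (f g : Lp ℝ 2 μ) : ‖Lp.posPart f - Lp.posPart g‖ ≤ ‖f - g‖ := by
  exact (LipschitzWith.norm_compLp_sub_le Lp.lipschitzWith_pos_part (max_eq_right le_rfl) f g).trans_eq (by simp)

lemma myNegPart_lip (f g : Lp ℝ 2 μ) : ‖Lp.negPart f - Lp.negPart g‖ ≤ ‖f - g‖ := by
  have h := myPosPart_lip (-f) (-g)
  rw [show -f - -g = -(f - g) by abel, norm_neg] at h
  exact h

lemma myInner_posPart_negPart (f : Lp ℝ 2 μ) :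
    ⟪Lp.posPart f, Lp.negPart f⟫ = 0 := by
  rw [L2.inner_def, ← integral_zero α ℝ]
  apply integral_congr_ae
  filter_upwards [Lp.coeFn_posPart f, Lp.coeFn_negPart f] with x h1 h2
  rw [RCLike.inner_apply, conj_trivial, h1, h2]
  rcases le_or_gt (f x) 0 with h | h
  · rw [max_eq_right h]; ring
  · rw [min_eq_right h.le]; ring

lemma myPosPart_sub_negPart (f : Lp ℝ 2 μ) : Lp.posPart f - Lp.negPart f = f := by
  ext
  filter_upwards [Lp.coeFn_posPart f, Lp.coeFn_negPart f,
    Lp.coeFn_sub (Lp.posPart f) (Lp.negPart f)] with x h1 h2 h3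
  rw [h3, Pi.sub_apply, h1, h2]
  rcases le_or_gt (f x) 0 with h | h
  · rw [max_eq_right h, min_eq_left h]; ring
  · rw [max_eq_left h.le, min_eq_right h.le]; ring

lemma myPosPart_negPart_norm (f : Lp ℝ 2 μ) :
    ‖Lp.posPart f‖ ^ 2 + ‖Lp.negPart f‖ ^ 2 = ‖f‖ ^ 2 := by
  have h2 := inner_sub_sub_self (𝕜 := ℝ) (Lp.posPart f) (Lp.negPart f)
  rw [myPosPart_sub_negPart] at h2
  have h0 : ⟪Lp.negPart f, Lp.posPart f⟫ = 0 := by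
    rw [real_inner_comm]; exact myInner_posPart_negPart f
  rw [real_inner_self_eq_norm_sq, real_inner_self_eq_norm_sq, real_inner_self_eq_norm_sq,
    h0, myInner_posPart_negPart] at h2
  linarith

lemma myInner_pos (h f : Lp ℝ 2 μ) (hh : ∀ᵐ x ∂μ, 0 < h x)
    (hf : 0 ≤ᵐ[μ] ⇑f) (hfn : f ≠ 0) : 0 < ⟪h, f⟫ := by
  have hint : Integrable (fun x => h x * f x) μ := by
    have := L2.integrable_inner (𝕜 := ℝ) h f
    simpa [RCLike.inner_apply, mul_comm] using this
  have hnn : 0 ≤ᵐ[μ] fun x => h x * f x := by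
    filter_upwards [hh, hf] with x h1 h2
    exact mul_nonneg h1.le h2
  have hid : ⟪h, f⟫ = ∫ x, h x * f x ∂μ := by
    rw [L2.inner_def]
    simp only [RCLike.inner_apply, conj_trivial]
    congr 1; funext x; ring
  rw [hid]
  rcases (integral_nonneg_of_ae hnn).lt_or_eq with hlt | heq
  · exact hlt
  · exfalso
    have hz : (fun x => h x * f x) =ᵐ[μ] 0 :=
      (integral_eq_zero_iff_of_nonneg_ae hnn hint).mp heq.symm
    have hf0 : ⇑f =ᵐ[μ] 0 := by
      filter_upwards [hz, hh] with x h1 h2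
      have := mul_eq_zero.mp h1
      rcases this with h3 | h3
      · exact absurd h3 h2.ne'
      · exact h3
    exact hfn (Lp.eq_zero_iff_ae_eq_zero.mpr hf0)

end HelperLemmas

section Master

variable {α : Type*} [MeasurableSpace α] {μ : Measure α}
    {X₀ : Type*} [NormedAddCommGroup X₀] [InnerProductSpace ℝ X₀]

set_option maxHeartbeats 1000000 in
lemma masterPos
    (T : X₀ →ₗ[ℝ] Lp ℝ 2 μ)
    {lk lam1 : ℝ} (hlam1 : 0 < lam1) (hlam1k : lam1 ≤ lk)
    {V₁ V₂ : Submodule ℝ X₀}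
    (hV₂ : ∀ v : X₀, v ∈ V₂ → ∀ u ∈ V₁, ⟪u, v⟫ = 0 ∧ ⟪T u, T v⟫ = 0)
    (hV₁b : ∀ u ∈ V₁, ⟪u, u⟫ ≤ lk * ‖T u‖ ^ 2)
    (φ₁ : V₁) (hφ₁pos : ∀ᵐ x ∂μ, 0 < (T (φ₁ : X₀)) x)
    (hφ₁eig : ∀ ψ : X₀, ⟪(φ₁ : X₀), ψ⟫ = lam1 * ⟪T (φ₁ : X₀), T ψ⟫)
    (hcpt : ∀ (u : ℕ → X₀) (C : ℝ), (∀ j, ‖u j‖ ≤ C) →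
      ∃ (w : Lp ℝ 2 μ) (σ : ℕ → ℕ), StrictMono σ ∧
        Tendsto (fun j => ‖T (u (σ j)) - w‖) atTop (nhds 0))
    (M : ℝ → ℝ → V₂ → V₁)
    (hM : ∀ a b : ℝ, lk < a → a ≤ b → ∀ (v : V₂) (u : V₁),
      Jfun T a b ((u : X₀) + (v : X₀)) ≤ Jfun T a b ((M a b v : X₀) + (v : X₀)))
    {A₀ B Θ : ℝ} (hA : lk < A₀)
    (a b : ℕ → ℝ) (v : ℕ → V₂)
    (haj : ∀ j, A₀ ≤ a j) (hab : ∀ j, a j ≤ b j) (hbB : ∀ j, b j ≤ B)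
    {a' b' : ℝ} (hca : Tendsto a atTop (𝓝 a')) (hcb : Tendsto b atTop (𝓝 b'))
    (hvn : ∀ j, ‖T (v j : X₀)‖ = 1)
    (hJ : ∀ j, Jfun T (a j) (b j) ((M (a j) (b j) (v j) : X₀) + (v j : X₀)) ≤ Θ)
    (hsgn : Tendsto (fun j => ‖Lp.posPart (T ((M (a j) (b j) (v j) : X₀) + (v j : X₀)))‖)
      atTop (𝓝 0)) : False := by
  classical
  set φ : X₀ := (φ₁ : X₀) with hφdef
  set u : ℕ → X₀ := fun j => ((M (a j) (b j) (v j) : X₀)) with hudef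
  set W : ℕ → X₀ := fun j => u j + (v j : X₀) with hWdef
  set r : ℝ := ‖T φ‖ with hrdef
  set q : ℝ := ⟪φ, φ⟫ with hqdef
  have hlka : ∀ j, lk < a j := fun j => lt_of_lt_of_le hA (haj j)
  have ha0 : ∀ j, 0 < a j := fun j => lt_trans (lt_of_lt_of_le hlam1 hlam1k) (hlka j)
  have hb0 : ∀ j, 0 < b j := fun j => lt_of_lt_of_le (ha0 j) (hab j)
  have horth : ∀ j, ⟪u j, (v j : X₀)⟫ = 0 ∧ ⟪T (u j), T (v j : X₀)⟫ = 0 :=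
    fun j => hV₂ _ (v j).2 _ (M (a j) (b j) (v j)).2
  -- norm splitting
  have hTW : ∀ j, T (W j) = T (u j) + T (v j : X₀) := fun j => map_add T _ _
  have nTW : ∀ j, ‖T (W j)‖ ^ 2 = ‖T (u j)‖ ^ 2 + 1 := by
    intro j
    rw [hTW j, norm_add_sq_real, (horth j).2, hvn j]; ring
  have iWW : ∀ j, ⟪W j, W j⟫ = ⟪u j, u j⟫ + ⟪(v j : X₀), (v j : X₀)⟫ := by
    intro j
    show ⟪u j + (v j : X₀), u j + (v j : X₀)⟫ = _
    rw [real_inner_add_add_self, (horth j).1]; ring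
  -- split of Jfun W
  have hsplitW : ∀ j, ‖Lp.posPart (T (W j))‖ ^ 2 + ‖Lp.negPart (T (W j))‖ ^ 2
      = ‖T (u j)‖ ^ 2 + 1 := by
    intro j; rw [myPosPart_negPart_norm, nTW j]
  have hsplitv : ∀ j, ‖Lp.posPart (T (v j : X₀))‖ ^ 2 + ‖Lp.negPart (T (v j : X₀))‖ ^ 2
      = 1 := by
    intro j; rw [myPosPart_negPart_norm, hvn j]; norm_num
  -- key bound on ‖T u j‖
  have hkey : ∀ j, (a j - lk) * ‖T (u j)‖ ^ 2 ≤ b j - a j := by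
    intro j
    have h0 := hM (a j) (b j) (hlka j) (hab j) (v j) 0
    rw [show ((0 : V₁) : X₀) = 0 from rfl, zero_add] at h0
    have hub := hV₁b (u j) (M (a j) (b j) (v j)).2
    have e1 := hsplitv j
    have e2 := hsplitW j
    have hJv : Jfun T (a j) (b j) (v j : X₀) =
        (⟪(v j : X₀), (v j : X₀)⟫ - a j * ‖Lp.posPart (T (v j : X₀))‖ ^ 2
          - b j * ‖Lp.negPart (T (v j : X₀))‖ ^ 2) / 2 := rfl
    have hJW : Jfun T (a j) (b j) (W j) =
        (⟪W j, W j⟫ - a j * ‖Lp.posPart (T (W j))‖ ^ 2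
          - b j * ‖Lp.negPart (T (W j))‖ ^ 2) / 2 := rfl
    rw [hJv, hJW, iWW j] at h0
    have e2a : a j * (‖Lp.posPart (T (W j))‖ ^ 2 + ‖Lp.negPart (T (W j))‖ ^ 2)
        = a j * (‖T (u j)‖ ^ 2 + 1) := by rw [e2]
    have e1b : b j * (‖Lp.posPart (T (v j : X₀))‖ ^ 2 + ‖Lp.negPart (T (v j : X₀))‖ ^ 2)
        = b j * 1 := by rw [e1]
    linarith [h0, hub, e2a, e1b,
      mul_nonneg (sub_nonneg.mpr (hab j)) (sq_nonneg ‖Lp.posPart (T (v j : X₀))‖),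
      mul_nonneg (sub_nonneg.mpr (hab j)) (sq_nonneg ‖Lp.negPart (T (W j))‖)]
  -- uniform bounds
  have hlk0 : (0:ℝ) < lk := lt_of_lt_of_le hlam1 hlam1k
  set CU : ℝ := (B - A₀) / (A₀ - lk) with hCUdef
  have hAB : A₀ ≤ B := le_trans (haj 0) (le_trans (hab 0) (hbB 0))
  have hTu : ∀ j, ‖T (u j)‖ ^ 2 ≤ CU := by
    intro j
    rw [hCUdef, le_div_iff₀ (by linarith)]
    nlinarith [hkey j, sq_nonneg ‖T (u j)‖, haj j, hbB j, hab j]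
  have hvb : ∀ j, ⟪(v j : X₀), (v j : X₀)⟫ ≤ 2 * Θ + B * (CU + 1) := by
    intro j
    have h0 := hJ j
    have hJW : Jfun T (a j) (b j) (W j) =
        (⟪W j, W j⟫ - a j * ‖Lp.posPart (T (W j))‖ ^ 2
          - b j * ‖Lp.negPart (T (W j))‖ ^ 2) / 2 := rfl
    rw [show ((M (a j) (b j) (v j) : X₀) + ((v j : X₀)) : X₀) = W j from rfl, hJW, iWW j] at h0
    have e2 := hsplitW j
    have e2b : b j * (‖Lp.posPart (T (W j))‖ ^ 2 + ‖Lp.negPart (T (W j))‖ ^ 2)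
        = b j * (‖T (u j)‖ ^ 2 + 1) := by rw [e2]
    have hBb : b j * (‖T (u j)‖ ^ 2 + 1) ≤ B * (CU + 1) := by
      apply mul_le_mul (hbB j) (by linarith [hTu j]) (by positivity) (by linarith [hb0 j, hbB j])
    linarith [h0, e2b, hBb, real_inner_self_nonneg (x := u j),
      mul_nonneg (sub_nonneg.mpr (hab j)) (sq_nonneg ‖Lp.posPart (T (W j))‖)]
  have hWn : ∀ j, ‖W j‖ ≤ Real.sqrt (lk * CU + (2 * Θ + B * (CU + 1))) := by
    intro j
    have h2 : ‖W j‖ ^ 2 ≤ lk * CU + (2 * Θ + B * (CU + 1)) := by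
      have := real_inner_self_eq_norm_sq (W j)
      have h3 := hV₁b (u j) (M (a j) (b j) (v j)).2
      have h4 : lk * ‖T (u j)‖ ^ 2 ≤ lk * CU := mul_le_mul_of_nonneg_left (hTu j) hlk0.le
      nlinarith [iWW j, hvb j]
    calc ‖W j‖ = Real.sqrt (‖W j‖ ^ 2) := (Real.sqrt_sq (norm_nonneg _)).symm
    _ ≤ _ := Real.sqrt_le_sqrt h2
  obtain ⟨g, σ, hσ, hg⟩ := hcpt W _ hWn
  have hTWg : Tendsto (fun j => T (W (σ j))) atTop (𝓝 g) :=
    tendsto_iff_norm_sub_tendsto_zero.mpr hg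
  have hsgnσ : Tendsto (fun j => ‖Lp.posPart (T (W (σ j)))‖) atTop (𝓝 0) :=
    hsgn.comp hσ.tendsto_atTop
  have hcaσ : Tendsto (fun j => a (σ j)) atTop (𝓝 a') := hca.comp hσ.tendsto_atTop
  have hcbσ : Tendsto (fun j => b (σ j)) atTop (𝓝 b') := hcb.comp hσ.tendsto_atTop
  -- the limit is nonpositive
  have hPg : Lp.posPart g = 0 := by
    have hb2 : ∀ j, ‖Lp.posPart g‖ ≤ ‖T (W (σ j)) - g‖ + ‖Lp.posPart (T (W (σ j)))‖ := by
      intro j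
      have h5 := norm_sub_norm_le (Lp.posPart g) (Lp.posPart (T (W (σ j))))
      have h6 := myPosPart_lip g (T (W (σ j)))
      have h7 : ‖g - T (W (σ j))‖ = ‖T (W (σ j)) - g‖ := norm_sub_rev _ _
      linarith
    have h0 : ‖Lp.posPart g‖ ≤ 0 := by
      have h8 : Tendsto (fun j => ‖T (W (σ j)) - g‖ + ‖Lp.posPart (T (W (σ j)))‖) atTop
          (𝓝 (0+0)) := hg.add hsgnσ
      rw [add_zero] at h8
      exact ge_of_tendsto' h8 hb2
    exact norm_le_zero_iff.mp h0
  have hgnorm : (1:ℝ) ≤ ‖g‖ := by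
    refine ge_of_tendsto' hTWg.norm ?_
    intro j
    nlinarith [nTW (σ j), sq_nonneg ‖T (u (σ j))‖, norm_nonneg (T (W (σ j)))]
  have hgeq : g = -Lp.negPart g := by
    have h8 := myPosPart_sub_negPart g
    rw [hPg, zero_sub] at h8
    exact h8.symm
  have hNnz : Lp.negPart g ≠ 0 := by
    intro h
    rw [h, neg_zero] at hgeq
    rw [hgeq] at hgnorm
    simp at hgnorm
    linarith
  have hδ : 0 < ⟪T φ, Lp.negPart g⟫ := by
    refine myInner_pos _ _ hφ₁pos ?_ hNnz
    filter_upwards [Lp.coeFn_negPart g] with x hx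
    rw [Pi.zero_apply, hx]
    exact neg_nonneg.mpr (min_le_right _ _)
  set δ : ℝ := ⟪T φ, Lp.negPart g⟫ with hδdef
  have hIg : ⟪T φ, g⟫ = -δ := by
    nth_rewrite 1 [hgeq]
    rw [inner_neg_right]
  have hIconv : Tendsto (fun j => ⟪T φ, T (W (σ j))⟫) atTop (𝓝 (-δ)) := by
    have hc : Tendsto (fun _ : ℕ => T φ) atTop (𝓝 (T φ)) := tendsto_const_nhds
    have h9 := Filter.Tendsto.inner (𝕜 := ℝ) hc hTWg
    rwa [hIg] at h9
  -- key inequality for each j and t > 0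
  have hKeyIneq : ∀ t : ℝ, 0 < t → ∀ j,
      2*t*((lam1 - b j)*⟪T φ, T (W j)⟫) ≤
        a j*(‖Lp.posPart (T (W j))‖ + t*‖T φ‖)^2 - a j*‖Lp.posPart (T (W j))‖^2
          + b j*‖Lp.posPart (T (W j))‖^2 + t^2*(b j*‖T φ‖^2 - ⟪φ, φ⟫) := by
    intro t ht j
    have h1 := hM (a j) (b j) (hlka j) (hab j) (v j) (M (a j) (b j) (v j) + t • φ₁)
    have hco : ((M (a j) (b j) (v j) + t • φ₁ : V₁) : X₀) + (v j : X₀) = W j + t • φ := by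
      show ((M (a j) (b j) (v j) : X₀) + t • φ) + (v j : X₀) = (u j + (v j : X₀)) + t • φ
      exact add_right_comm _ _ _
    rw [hco, show ((M (a j) (b j) (v j) : X₀) + ((v j : X₀)) : X₀) = W j from rfl] at h1
    have eX : T (W j + t • φ) = T (W j) + t • T φ := by rw [map_add, LinearMap.map_smul]
    have hWφ : ⟪W j, φ⟫ = lam1*⟪T φ, T (W j)⟫ := by
      rw [real_inner_comm φ (W j)]
      exact hφ₁eig (W j)
    have einner : ⟪W j + t • φ, W j + t • φ⟫ =
        ⟪W j, W j⟫ + 2*(t*(lam1*⟪T φ, T (W j)⟫)) + t*(t*⟪φ, φ⟫) := by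
      rw [real_inner_add_add_self, real_inner_smul_right, real_inner_smul_left,
        real_inner_smul_right, hWφ]
    have ePle : ‖Lp.posPart (T (W j) + t • T φ)‖ ≤ ‖Lp.posPart (T (W j))‖ + t*‖T φ‖ := by
      have h2 := myPosPart_lip (T (W j) + t • T φ) (T (W j))
      have h3 : (T (W j) + t • T φ) - T (W j) = t • T φ := by abel
      rw [h3, norm_smul, Real.norm_eq_abs, abs_of_pos ht] at h2
      have h4 := norm_sub_norm_le (Lp.posPart (T (W j) + t • T φ)) (Lp.posPart (T (W j)))
      linarith
    have eNle : ‖Lp.negPart (T (W j) + t • T φ)‖^2 ≤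
        ‖T (W j)‖^2 + 2*(t*⟪T φ, T (W j)⟫) + t*(t*‖T φ‖^2) := by
      have h5 := myPosPart_negPart_norm (T (W j) + t • T φ)
      have h6 : ‖T (W j) + t • T φ‖^2 =
          ‖T (W j)‖^2 + 2*(t*⟪T φ, T (W j)⟫) + t*(t*‖T φ‖^2) := by
        rw [norm_add_sq_real, real_inner_smul_right, norm_smul, Real.norm_eq_abs,
          abs_of_pos ht, real_inner_comm (T φ) (T (W j))]
        ring
      nlinarith [sq_nonneg ‖Lp.posPart (T (W j) + t • T φ)‖]
    have hJ1 : Jfun T (a j) (b j) (W j + t • φ) =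
        (⟪W j + t • φ, W j + t • φ⟫ - a j * ‖Lp.posPart (T (W j + t • φ))‖^2
          - b j * ‖Lp.negPart (T (W j + t • φ))‖^2)/2 := rfl
    have hJ2 : Jfun T (a j) (b j) (W j) =
        (⟪W j, W j⟫ - a j * ‖Lp.posPart (T (W j))‖^2
          - b j * ‖Lp.negPart (T (W j))‖^2)/2 := rfl
    rw [hJ1, hJ2, eX] at h1
    have esum := myPosPart_negPart_norm (T (W j))
    have haPX : a j * ‖Lp.posPart (T (W j) + t • T φ)‖^2 ≤
        a j * (‖Lp.posPart (T (W j))‖ + t*‖T φ‖)^2 :=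
      mul_le_mul_of_nonneg_left (pow_le_pow_left₀ (norm_nonneg _) ePle 2) (ha0 j).le
    have hbNX : b j * ‖Lp.negPart (T (W j) + t • T φ)‖^2 ≤
        b j * (‖T (W j)‖^2 + 2*(t*⟪T φ, T (W j)⟫) + t*(t*‖T φ‖^2)) :=
      mul_le_mul_of_nonneg_left eNle (hb0 j).le
    have esumb : b j * (‖Lp.posPart (T (W j))‖ ^ 2 + ‖Lp.negPart (T (W j))‖ ^ 2)
        = b j * ‖T (W j)‖ ^ 2 := by rw [esum]
    linarith [h1, einner, esumb, haPX, hbNX]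
  -- pass to the limit in j
  have hfinal : ∀ t : ℝ, 0 < t →
      2*t*((lam1 - b')*(-δ)) ≤ a'*((0:ℝ) + t*‖T φ‖)^2 - a'*(0:ℝ)^2 + b'*(0:ℝ)^2
        + t^2*(b'*‖T φ‖^2 - ⟪φ, φ⟫) := by
    intro t ht
    have htL : Tendsto (fun j => 2*t*((lam1 - b (σ j))*⟪T φ, T (W (σ j))⟫)) atTop
        (𝓝 (2*t*((lam1 - b')*(-δ)))) :=
      ((tendsto_const_nhds.sub hcbσ).mul hIconv).const_mul _
    have htR : Tendsto (fun j =>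
        a (σ j)*(‖Lp.posPart (T (W (σ j)))‖ + t*‖T φ‖)^2
          - a (σ j)*‖Lp.posPart (T (W (σ j)))‖^2
          + b (σ j)*‖Lp.posPart (T (W (σ j)))‖^2
          + t^2*(b (σ j)*‖T φ‖^2 - ⟪φ, φ⟫)) atTop
        (𝓝 (a'*((0:ℝ) + t*‖T φ‖)^2 - a'*(0:ℝ)^2 + b'*(0:ℝ)^2
          + t^2*(b'*‖T φ‖^2 - ⟪φ, φ⟫))) := by
      exact (((hcaσ.mul ((hsgnσ.add tendsto_const_nhds).pow 2)).sub
        (hcaσ.mul (hsgnσ.pow 2))).add (hcbσ.mul (hsgnσ.pow 2))).add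
        (tendsto_const_nhds.mul ((hcbσ.mul tendsto_const_nhds).sub tendsto_const_nhds))
    exact le_of_tendsto_of_tendsto' htL htR (fun j => hKeyIneq t ht (σ j))
  -- derive the contradiction
  have hb'A : A₀ ≤ b' := ge_of_tendsto' hcbσ (fun j => le_trans (haj (σ j)) (hab (σ j)))
  have hD : 0 < (b' - lam1)*δ := mul_pos (by linarith) hδ
  set c : ℝ := a'*‖T φ‖^2 + b'*‖T φ‖^2 - ⟪φ, φ⟫ with hcdef
  have hfin2 : ∀ t : ℝ, 0 < t → 2*t*((b' - lam1)*δ) ≤ t^2*c := by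
    intro t ht
    have := hfinal t ht
    rw [hcdef]
    nlinarith [this]
  have ht0 : 0 < (b' - lam1)*δ / (|c| + 1) := by positivity
  have h10 := hfin2 _ ht0
  have h11 : ((b' - lam1)*δ / (|c| + 1))^2 * c ≤ ((b' - lam1)*δ / (|c| + 1))^2 * (|c| + 1) :=
    mul_le_mul_of_nonneg_left (by linarith [le_abs_self c]) (sq_nonneg _)
  have h12 : ((b' - lam1)*δ / (|c| + 1))^2 * (|c| + 1)
      = (b' - lam1)*δ * ((b' - lam1)*δ / (|c| + 1)) := by
    field_simp
  nlinarith [h10, h11, h12, ht0, hD]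


set_option maxHeartbeats 1000000 in
lemma masterNeg
    (T : X₀ →ₗ[ℝ] Lp ℝ 2 μ)
    {lk lam1 : ℝ} (hlam1 : 0 < lam1) (hlam1k : lam1 ≤ lk)
    {V₁ V₂ : Submodule ℝ X₀}
    (hV₂ : ∀ v : X₀, v ∈ V₂ → ∀ u ∈ V₁, ⟪u, v⟫ = 0 ∧ ⟪T u, T v⟫ = 0)
    (hV₁b : ∀ u ∈ V₁, ⟪u, u⟫ ≤ lk * ‖T u‖ ^ 2)
    (φ₁ : V₁) (hφ₁pos : ∀ᵐ x ∂μ, 0 < (T (φ₁ : X₀)) x)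
    (hφ₁eig : ∀ ψ : X₀, ⟪(φ₁ : X₀), ψ⟫ = lam1 * ⟪T (φ₁ : X₀), T ψ⟫)
    (hcpt : ∀ (u : ℕ → X₀) (C : ℝ), (∀ j, ‖u j‖ ≤ C) →
      ∃ (w : Lp ℝ 2 μ) (σ : ℕ → ℕ), StrictMono σ ∧
        Tendsto (fun j => ‖T (u (σ j)) - w‖) atTop (nhds 0))
    (M : ℝ → ℝ → V₂ → V₁)
    (hM : ∀ a b : ℝ, lk < a → a ≤ b → ∀ (v : V₂) (u : V₁),
      Jfun T a b ((u : X₀) + (v : X₀)) ≤ Jfun T a b ((M a b v : X₀) + (v : X₀)))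
    {A₀ B Θ : ℝ} (hA : lk < A₀)
    (a b : ℕ → ℝ) (v : ℕ → V₂)
    (haj : ∀ j, A₀ ≤ a j) (hab : ∀ j, a j ≤ b j) (hbB : ∀ j, b j ≤ B)
    {a' b' : ℝ} (hca : Tendsto a atTop (𝓝 a')) (hcb : Tendsto b atTop (𝓝 b'))
    (hvn : ∀ j, ‖T (v j : X₀)‖ = 1)
    (hJ : ∀ j, Jfun T (a j) (b j) ((M (a j) (b j) (v j) : X₀) + (v j : X₀)) ≤ Θ)
    (hsgn : Tendsto (fun j => ‖Lp.negPart (T ((M (a j) (b j) (v j) : X₀) + (v j : X₀)))‖)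
      atTop (𝓝 0)) : False := by
  classical
  set φ : X₀ := (φ₁ : X₀) with hφdef
  set u : ℕ → X₀ := fun j => ((M (a j) (b j) (v j) : X₀)) with hudef
  set W : ℕ → X₀ := fun j => u j + (v j : X₀) with hWdef
  set r : ℝ := ‖T φ‖ with hrdef
  set q : ℝ := ⟪φ, φ⟫ with hqdef
  have hlka : ∀ j, lk < a j := fun j => lt_of_lt_of_le hA (haj j)
  have ha0 : ∀ j, 0 < a j := fun j => lt_trans (lt_of_lt_of_le hlam1 hlam1k) (hlka j)
  have hb0 : ∀ j, 0 < b j := fun j => lt_of_lt_of_le (ha0 j) (hab j)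
  have horth : ∀ j, ⟪u j, (v j : X₀)⟫ = 0 ∧ ⟪T (u j), T (v j : X₀)⟫ = 0 :=
    fun j => hV₂ _ (v j).2 _ (M (a j) (b j) (v j)).2
  -- norm splitting
  have hTW : ∀ j, T (W j) = T (u j) + T (v j : X₀) := fun j => map_add T _ _
  have nTW : ∀ j, ‖T (W j)‖ ^ 2 = ‖T (u j)‖ ^ 2 + 1 := by
    intro j
    rw [hTW j, norm_add_sq_real, (horth j).2, hvn j]; ring
  have iWW : ∀ j, ⟪W j, W j⟫ = ⟪u j, u j⟫ + ⟪(v j : X₀), (v j : X₀)⟫ := by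
    intro j
    show ⟪u j + (v j : X₀), u j + (v j : X₀)⟫ = _
    rw [real_inner_add_add_self, (horth j).1]; ring
  -- split of Jfun W
  have hsplitW : ∀ j, ‖Lp.posPart (T (W j))‖ ^ 2 + ‖Lp.negPart (T (W j))‖ ^ 2
      = ‖T (u j)‖ ^ 2 + 1 := by
    intro j; rw [myPosPart_negPart_norm, nTW j]
  have hsplitv : ∀ j, ‖Lp.posPart (T (v j : X₀))‖ ^ 2 + ‖Lp.negPart (T (v j : X₀))‖ ^ 2
      = 1 := by
    intro j; rw [myPosPart_negPart_norm, hvn j]; norm_num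
  -- key bound on ‖T u j‖
  have hkey : ∀ j, (a j - lk) * ‖T (u j)‖ ^ 2 ≤ b j - a j := by
    intro j
    have h0 := hM (a j) (b j) (hlka j) (hab j) (v j) 0
    rw [show ((0 : V₁) : X₀) = 0 from rfl, zero_add] at h0
    have hub := hV₁b (u j) (M (a j) (b j) (v j)).2
    have e1 := hsplitv j
    have e2 := hsplitW j
    have hJv : Jfun T (a j) (b j) (v j : X₀) =
        (⟪(v j : X₀), (v j : X₀)⟫ - a j * ‖Lp.posPart (T (v j : X₀))‖ ^ 2
          - b j * ‖Lp.negPart (T (v j : X₀))‖ ^ 2) / 2 := rfl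
    have hJW : Jfun T (a j) (b j) (W j) =
        (⟪W j, W j⟫ - a j * ‖Lp.posPart (T (W j))‖ ^ 2
          - b j * ‖Lp.negPart (T (W j))‖ ^ 2) / 2 := rfl
    rw [hJv, hJW, iWW j] at h0
    have e2a : a j * (‖Lp.posPart (T (W j))‖ ^ 2 + ‖Lp.negPart (T (W j))‖ ^ 2)
        = a j * (‖T (u j)‖ ^ 2 + 1) := by rw [e2]
    have e1b : b j * (‖Lp.posPart (T (v j : X₀))‖ ^ 2 + ‖Lp.negPart (T (v j : X₀))‖ ^ 2)
        = b j * 1 := by rw [e1]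
    linarith [h0, hub, e2a, e1b,
      mul_nonneg (sub_nonneg.mpr (hab j)) (sq_nonneg ‖Lp.posPart (T (v j : X₀))‖),
      mul_nonneg (sub_nonneg.mpr (hab j)) (sq_nonneg ‖Lp.negPart (T (W j))‖)]
  -- uniform bounds
  have hlk0 : (0:ℝ) < lk := lt_of_lt_of_le hlam1 hlam1k
  set CU : ℝ := (B - A₀) / (A₀ - lk) with hCUdef
  have hAB : A₀ ≤ B := le_trans (haj 0) (le_trans (hab 0) (hbB 0))
  have hTu : ∀ j, ‖T (u j)‖ ^ 2 ≤ CU := by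
    intro j
    rw [hCUdef, le_div_iff₀ (by linarith)]
    nlinarith [hkey j, sq_nonneg ‖T (u j)‖, haj j, hbB j, hab j]
  have hvb : ∀ j, ⟪(v j : X₀), (v j : X₀)⟫ ≤ 2 * Θ + B * (CU + 1) := by
    intro j
    have h0 := hJ j
    have hJW : Jfun T (a j) (b j) (W j) =
        (⟪W j, W j⟫ - a j * ‖Lp.posPart (T (W j))‖ ^ 2
          - b j * ‖Lp.negPart (T (W j))‖ ^ 2) / 2 := rfl
    rw [show ((M (a j) (b j) (v j) : X₀) + ((v j : X₀)) : X₀) = W j from rfl, hJW, iWW j] at h0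
    have e2 := hsplitW j
    have e2b : b j * (‖Lp.posPart (T (W j))‖ ^ 2 + ‖Lp.negPart (T (W j))‖ ^ 2)
        = b j * (‖T (u j)‖ ^ 2 + 1) := by rw [e2]
    have hBb : b j * (‖T (u j)‖ ^ 2 + 1) ≤ B * (CU + 1) := by
      apply mul_le_mul (hbB j) (by linarith [hTu j]) (by positivity) (by linarith [hb0 j, hbB j])
    linarith [h0, e2b, hBb, real_inner_self_nonneg (x := u j),
      mul_nonneg (sub_nonneg.mpr (hab j)) (sq_nonneg ‖Lp.posPart (T (W j))‖)]
  have hWn : ∀ j, ‖W j‖ ≤ Real.sqrt (lk * CU + (2 * Θ + B * (CU + 1))) := by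
    intro j
    have h2 : ‖W j‖ ^ 2 ≤ lk * CU + (2 * Θ + B * (CU + 1)) := by
      have := real_inner_self_eq_norm_sq (W j)
      have h3 := hV₁b (u j) (M (a j) (b j) (v j)).2
      have h4 : lk * ‖T (u j)‖ ^ 2 ≤ lk * CU := mul_le_mul_of_nonneg_left (hTu j) hlk0.le
      nlinarith [iWW j, hvb j]
    calc ‖W j‖ = Real.sqrt (‖W j‖ ^ 2) := (Real.sqrt_sq (norm_nonneg _)).symm
    _ ≤ _ := Real.sqrt_le_sqrt h2
  obtain ⟨g, σ, hσ, hg⟩ := hcpt W _ hWn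
  have hTWg : Tendsto (fun j => T (W (σ j))) atTop (𝓝 g) :=
    tendsto_iff_norm_sub_tendsto_zero.mpr hg
  have hsgnσ : Tendsto (fun j => ‖Lp.negPart (T (W (σ j)))‖) atTop (𝓝 0) :=
    hsgn.comp hσ.tendsto_atTop
  have hcaσ : Tendsto (fun j => a (σ j)) atTop (𝓝 a') := hca.comp hσ.tendsto_atTop
  have hcbσ : Tendsto (fun j => b (σ j)) atTop (𝓝 b') := hcb.comp hσ.tendsto_atTop
  -- the limit is nonpositive
  have hPg : Lp.negPart g = 0 := by
    have hb2 : ∀ j, ‖Lp.negPart g‖ ≤ ‖T (W (σ j)) - g‖ + ‖Lp.negPart (T (W (σ j)))‖ := by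
      intro j
      have h5 := norm_sub_norm_le (Lp.negPart g) (Lp.negPart (T (W (σ j))))
      have h6 := myNegPart_lip g (T (W (σ j)))
      have h7 : ‖g - T (W (σ j))‖ = ‖T (W (σ j)) - g‖ := norm_sub_rev _ _
      linarith
    have h0 : ‖Lp.negPart g‖ ≤ 0 := by
      have h8 : Tendsto (fun j => ‖T (W (σ j)) - g‖ + ‖Lp.negPart (T (W (σ j)))‖) atTop
          (𝓝 (0+0)) := hg.add hsgnσ
      rw [add_zero] at h8
      exact ge_of_tendsto' h8 hb2
    exact norm_le_zero_iff.mp h0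
  have hgnorm : (1:ℝ) ≤ ‖g‖ := by
    refine ge_of_tendsto' hTWg.norm ?_
    intro j
    nlinarith [nTW (σ j), sq_nonneg ‖T (u (σ j))‖, norm_nonneg (T (W (σ j)))]
  have hgeq : g = Lp.posPart g := by
    have h8 := myPosPart_sub_negPart g
    rw [hPg, sub_zero] at h8
    exact h8.symm
  have hNnz : Lp.posPart g ≠ 0 := by
    intro h
    rw [h] at hgeq
    rw [hgeq] at hgnorm
    simp at hgnorm
    linarith
  have hδ : 0 < ⟪T φ, Lp.posPart g⟫ := by
    refine myInner_pos _ _ hφ₁pos ?_ hNnz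
    filter_upwards [Lp.coeFn_posPart g] with x hx
    rw [Pi.zero_apply, hx]
    exact le_max_right _ _
  set δ : ℝ := ⟪T φ, Lp.posPart g⟫ with hδdef
  have hIg : ⟪T φ, g⟫ = δ := by
    nth_rewrite 1 [hgeq]
    rfl
  have hIconv : Tendsto (fun j => ⟪T φ, T (W (σ j))⟫) atTop (𝓝 δ) := by
    have hc : Tendsto (fun _ : ℕ => T φ) atTop (𝓝 (T φ)) := tendsto_const_nhds
    have h9 := Filter.Tendsto.inner (𝕜 := ℝ) hc hTWg
    rwa [hIg] at h9
  -- key inequality for each j and t > 0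
  have hKeyIneq : ∀ t : ℝ, 0 < t → ∀ j,
      2*t*((a j - lam1)*⟪T φ, T (W j)⟫) ≤
        b j*(‖Lp.negPart (T (W j))‖ + t*‖T φ‖)^2 - b j*‖Lp.negPart (T (W j))‖^2
          + a j*‖Lp.negPart (T (W j))‖^2 + t^2*(a j*‖T φ‖^2 - ⟪φ, φ⟫) := by
    intro t ht j
    have h1 := hM (a j) (b j) (hlka j) (hab j) (v j) (M (a j) (b j) (v j) - t • φ₁)
    have hco : ((M (a j) (b j) (v j) - t • φ₁ : V₁) : X₀) + (v j : X₀) = W j - t • φ := by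
      show ((M (a j) (b j) (v j) : X₀) - t • φ) + (v j : X₀) = (u j + (v j : X₀)) - t • φ
      exact sub_add_eq_add_sub _ _ _
    rw [hco, show ((M (a j) (b j) (v j) : X₀) + ((v j : X₀)) : X₀) = W j from rfl] at h1
    have eX : T (W j - t • φ) = T (W j) - t • T φ := by rw [map_sub, LinearMap.map_smul]
    have hWφ : ⟪W j, φ⟫ = lam1*⟪T φ, T (W j)⟫ := by
      rw [real_inner_comm φ (W j)]
      exact hφ₁eig (W j)
    have einner : ⟪W j - t • φ, W j - t • φ⟫ =
        ⟪W j, W j⟫ - 2*(t*(lam1*⟪T φ, T (W j)⟫)) + t*(t*⟪φ, φ⟫) := by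
      rw [real_inner_sub_sub_self, real_inner_smul_right, real_inner_smul_left,
        real_inner_smul_right, hWφ]
    have eNle2 : ‖Lp.negPart (T (W j) - t • T φ)‖ ≤ ‖Lp.negPart (T (W j))‖ + t*‖T φ‖ := by
      have h2 := myNegPart_lip (T (W j) - t • T φ) (T (W j))
      have h3 : (T (W j) - t • T φ) - T (W j) = -(t • T φ) := by abel
      rw [h3, norm_neg, norm_smul, Real.norm_eq_abs, abs_of_pos ht] at h2
      have h4 := norm_sub_norm_le (Lp.negPart (T (W j) - t • T φ)) (Lp.negPart (T (W j)))
      linarith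
    have ePle2 : ‖Lp.posPart (T (W j) - t • T φ)‖^2 ≤
        ‖T (W j)‖^2 - 2*(t*⟪T φ, T (W j)⟫) + t*(t*‖T φ‖^2) := by
      have h5 := myPosPart_negPart_norm (T (W j) - t • T φ)
      have h6 : ‖T (W j) - t • T φ‖^2 =
          ‖T (W j)‖^2 - 2*(t*⟪T φ, T (W j)⟫) + t*(t*‖T φ‖^2) := by
        rw [norm_sub_sq_real, real_inner_smul_right, norm_smul, Real.norm_eq_abs,
          abs_of_pos ht, real_inner_comm (T φ) (T (W j))]
        ring
      nlinarith [sq_nonneg ‖Lp.negPart (T (W j) - t • T φ)‖]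
    have hJ1 : Jfun T (a j) (b j) (W j - t • φ) =
        (⟪W j - t • φ, W j - t • φ⟫ - a j * ‖Lp.posPart (T (W j - t • φ))‖^2
          - b j * ‖Lp.negPart (T (W j - t • φ))‖^2)/2 := rfl
    have hJ2 : Jfun T (a j) (b j) (W j) =
        (⟪W j, W j⟫ - a j * ‖Lp.posPart (T (W j))‖^2
          - b j * ‖Lp.negPart (T (W j))‖^2)/2 := rfl
    rw [hJ1, hJ2, eX] at h1
    have esum := myPosPart_negPart_norm (T (W j))
    have hbNX : b j * ‖Lp.negPart (T (W j) - t • T φ)‖^2 ≤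
        b j * (‖Lp.negPart (T (W j))‖ + t*‖T φ‖)^2 :=
      mul_le_mul_of_nonneg_left (pow_le_pow_left₀ (norm_nonneg _) eNle2 2) (hb0 j).le
    have haPX : a j * ‖Lp.posPart (T (W j) - t • T φ)‖^2 ≤
        a j * (‖T (W j)‖^2 - 2*(t*⟪T φ, T (W j)⟫) + t*(t*‖T φ‖^2)) :=
      mul_le_mul_of_nonneg_left ePle2 (ha0 j).le
    have esuma : a j * (‖Lp.posPart (T (W j))‖ ^ 2 + ‖Lp.negPart (T (W j))‖ ^ 2)
        = a j * ‖T (W j)‖ ^ 2 := by rw [esum]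
    linarith [h1, einner, esuma, haPX, hbNX]
  -- pass to the limit in j
  have hfinal : ∀ t : ℝ, 0 < t →
      2*t*((a' - lam1)*δ) ≤ b'*((0:ℝ) + t*‖T φ‖)^2 - b'*(0:ℝ)^2 + a'*(0:ℝ)^2
        + t^2*(a'*‖T φ‖^2 - ⟪φ, φ⟫) := by
    intro t ht
    have htL : Tendsto (fun j => 2*t*((a (σ j) - lam1)*⟪T φ, T (W (σ j))⟫)) atTop
        (𝓝 (2*t*((a' - lam1)*δ))) :=
      ((hcaσ.sub tendsto_const_nhds).mul hIconv).const_mul _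
    have htR : Tendsto (fun j =>
        b (σ j)*(‖Lp.negPart (T (W (σ j)))‖ + t*‖T φ‖)^2
          - b (σ j)*‖Lp.negPart (T (W (σ j)))‖^2
          + a (σ j)*‖Lp.negPart (T (W (σ j)))‖^2
          + t^2*(a (σ j)*‖T φ‖^2 - ⟪φ, φ⟫)) atTop
        (𝓝 (b'*((0:ℝ) + t*‖T φ‖)^2 - b'*(0:ℝ)^2 + a'*(0:ℝ)^2
          + t^2*(a'*‖T φ‖^2 - ⟪φ, φ⟫))) := by
      exact (((hcbσ.mul ((hsgnσ.add tendsto_const_nhds).pow 2)).sub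
        (hcbσ.mul (hsgnσ.pow 2))).add (hcaσ.mul (hsgnσ.pow 2))).add
        (tendsto_const_nhds.mul ((hcaσ.mul tendsto_const_nhds).sub tendsto_const_nhds))
    exact le_of_tendsto_of_tendsto' htL htR (fun j => hKeyIneq t ht (σ j))
  -- derive the contradiction
  have ha'A : A₀ ≤ a' := ge_of_tendsto' hcaσ (fun j => haj (σ j))
  have hD : 0 < (a' - lam1)*δ := mul_pos (by linarith) hδ
  set c : ℝ := a'*‖T φ‖^2 + b'*‖T φ‖^2 - ⟪φ, φ⟫ with hcdef
  have hfin2 : ∀ t : ℝ, 0 < t → 2*t*((a' - lam1)*δ) ≤ t^2*c := by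
    intro t ht
    have := hfinal t ht
    rw [hcdef]
    nlinarith [this]
  have ht0 : 0 < (a' - lam1)*δ / (|c| + 1) := by positivity
  have h10 := hfin2 _ ht0
  have h11 : ((a' - lam1)*δ / (|c| + 1))^2 * c ≤ ((a' - lam1)*δ / (|c| + 1))^2 * (|c| + 1) :=
    mul_le_mul_of_nonneg_left (by linarith [le_abs_self c]) (sq_nonneg _)
  have h12 : ((a' - lam1)*δ / (|c| + 1))^2 * (|c| + 1)
      = (a' - lam1)*δ * ((a' - lam1)*δ / (|c| + 1)) := by
    field_simp
  nlinarith [h10, h11, h12, ht0, hD]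

end Master

set_option maxHeartbeats 2000000 in
theorem stmt_14
    {n : ℕ} {s : ℝ} (hs0 : 0 < s) (hs1 : s < 1) (hns : 2 * s < (n : ℝ))
    {Ωs : Set (EuclideanSpace ℝ (Fin n))} (hΩb : Bornology.IsBounded Ωs)
    (hΩm : MeasurableSet Ωs)
    {K : EuclideanSpace ℝ (Fin n) → ℝ} (hKpos : ∀ x, x ≠ 0 → 0 < K x)
    (hK1 : Integrable (fun x => min (‖x‖ ^ 2) 1 * K x))
    (hK2 : ∃ lam > 0, ∀ x, x ≠ 0 → lam * ‖x‖ ^ (-((n : ℝ) + 2 * s)) ≤ K x)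
    (hK3 : ∀ x, K (-x) = K x)
    {X₀ : Type*} [NormedAddCommGroup X₀] [InnerProductSpace ℝ X₀] [CompleteSpace X₀]
    (T : X₀ →ₗ[ℝ] Lp ℝ 2 (volume.restrict Ωs)) (hT : Function.Injective T)
    {lk lk1 : ℝ} (hlk0 : 0 < lk) (hlk : lk < lk1)
    (V₁ V₂ : Submodule ℝ X₀) [FiniteDimensional ℝ V₁]
    (hV₂ : ∀ v : X₀, v ∈ V₂ ↔ ∀ u ∈ V₁, ⟪u, v⟫ = 0 ∧ ⟪T u, T v⟫ = 0)
    (hcompl : IsCompl V₁ V₂)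
    (hV₁b : ∀ u ∈ V₁, ⟪u, u⟫ ≤ lk * ‖T u‖ ^ 2)
    (hV₂b : ∀ v ∈ V₂, lk1 * ‖T v‖ ^ 2 ≤ ⟪v, v⟫)
    (lam1 : ℝ) (hlam1 : 0 < lam1)
    (hPoin : ∀ u : X₀, lam1 * ‖T u‖ ^ 2 ≤ ⟪u, u⟫)
    (hlam1k : lam1 ≤ lk) (φ₁ : V₁)
    (hφ₁pos : ∀ᵐ x ∂(volume.restrict Ωs), 0 < (T (φ₁ : X₀)) x)
    (hφ₁eig : ∀ ψ : X₀, ⟪(φ₁ : X₀), ψ⟫ = lam1 * ⟪T (φ₁ : X₀), T ψ⟫)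
    (φk1 : V₂) (hφk1n : ‖T (φk1 : X₀)‖ = 1)
    (hφk1e : ∀ ψ : X₀, ⟪(φk1 : X₀), ψ⟫ = lk1 * ⟪T (φk1 : X₀), T ψ⟫)
    (hcpt : ∀ (u : ℕ → X₀) (C : ℝ), (∀ j, ‖u j‖ ≤ C) →
      ∃ (w : Lp ℝ 2 (volume.restrict Ωs)) (σ : ℕ → ℕ), StrictMono σ ∧
        Tendsto (fun j => ‖T (u (σ j)) - w‖) atTop (nhds 0))
    (M : ℝ → ℝ → V₂ → V₁)
    (hM : ∀ a b : ℝ, lk < a → a ≤ b → ∀ (v : V₂) (u : V₁),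
      Jfun T a b ((u : X₀) + (v : X₀)) ≤ Jfun T a b ((M a b v : X₀) + (v : X₀)))
    (m : ℝ → ℝ → ℝ)
    (hm : ∀ a b : ℝ, lk < a → a ≤ b → m a b =
      sInf {r : ℝ | ∃ v : V₂, ‖T (v : X₀)‖ = 1 ∧ r = Jfun T a b ((M a b v : X₀) + (v : X₀))})
    (βcurve : ℝ → ℝ)
    (hβcurve : ∀ a : ℝ, lk < a → a < lk1 → a ≤ βcurve a ∧ m a (βcurve a) = 0)
    :
    (∀ a₁ b₁ a₂ b₂ : ℝ, lk < a₁ → a₁ < a₂ → a₂ < lk1 → a₁ ≤ b₁ → a₂ ≤ b₂ →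
      m a₁ b₁ = 0 → m a₂ b₂ = 0 → b₂ < b₁) ∧
    (∀ Kc : Set ℝ, IsCompact Kc → Kc ⊆ Set.Ioo lk lk1 →
      ∃ C : ℝ, 0 ≤ C ∧ ∀ a₁ ∈ Kc, ∀ a₂ ∈ Kc, |βcurve a₂ - βcurve a₁| ≤ C * |a₂ - a₁|) := by
  classical
  have hV₂' : ∀ v : X₀, v ∈ V₂ → ∀ u ∈ V₁, ⟪u, v⟫ = 0 ∧ ⟪T u, T v⟫ = 0 :=
    fun v hv => (hV₂ v).mp hv
  -- lower bound for elements of the constraint set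
  have hSlb : ∀ a b : ℝ, lk < a → a ≤ b → ∀ r ∈ {r : ℝ | ∃ v : V₂, ‖T (v : X₀)‖ = 1 ∧
      r = Jfun T a b ((M a b v : X₀) + (v : X₀))}, (lk1 - b)/2 ≤ r := by
    intro a b h1 h2 r hr
    obtain ⟨v, hvn, rfl⟩ := hr
    have h0 := hM a b h1 h2 v 0
    rw [show ((0 : V₁) : X₀) = 0 from rfl, zero_add] at h0
    have hv2 := hV₂b (v : X₀) v.2
    rw [hvn] at hv2
    have hsplit := myPosPart_negPart_norm (T (v : X₀))
    rw [hvn] at hsplit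
    have hJv : Jfun T a b ((v : X₀)) = (⟪(v : X₀), (v : X₀)⟫
        - a * ‖Lp.posPart (T (v : X₀))‖ ^ 2 - b * ‖Lp.negPart (T (v : X₀))‖ ^ 2)/2 := rfl
    rw [hJv] at h0
    have e1b : b * (‖Lp.posPart (T (v : X₀))‖ ^ 2 + ‖Lp.negPart (T (v : X₀))‖ ^ 2)
        = b * 1 ^ 2 := by rw [hsplit]
    refine le_trans ?_ h0
    linarith [mul_nonneg (sub_nonneg.mpr h2) (sq_nonneg ‖Lp.posPart (T (v : X₀))‖), e1b, hv2]
  have hbdd : ∀ a b : ℝ, lk < a → a ≤ b → BddBelow {r : ℝ | ∃ v : V₂, ‖T (v : X₀)‖ = 1 ∧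
      r = Jfun T a b ((M a b v : X₀) + (v : X₀))} :=
    fun a b h1 h2 => ⟨(lk1 - b)/2, hSlb a b h1 h2⟩
  have hSne : ∀ a b : ℝ, Set.Nonempty {r : ℝ | ∃ v : V₂, ‖T (v : X₀)‖ = 1 ∧
      r = Jfun T a b ((M a b v : X₀) + (v : X₀))} :=
    fun a b => ⟨_, φk1, hφk1n, rfl⟩
  have hmle : ∀ a b : ℝ, lk < a → a ≤ b → ∀ v : V₂, ‖T (v : X₀)‖ = 1 →
      m a b ≤ Jfun T a b ((M a b v : X₀) + (v : X₀)) := by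
    intro a b h1 h2 v hv
    rw [hm a b h1 h2]
    exact csInf_le (hbdd a b h1 h2) ⟨v, hv, rfl⟩
  have hmnear : ∀ a b : ℝ, lk < a → a ≤ b → ∀ ε : ℝ, 0 < ε → ∃ v : V₂,
      ‖T (v : X₀)‖ = 1 ∧ Jfun T a b ((M a b v : X₀) + (v : X₀)) < m a b + ε := by
    intro a b h1 h2 ε hε
    have h3 : sInf {r : ℝ | ∃ v : V₂, ‖T (v : X₀)‖ = 1 ∧
        r = Jfun T a b ((M a b v : X₀) + (v : X₀))} < m a b + ε := by
      rw [← hm a b h1 h2]; linarith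
    obtain ⟨r, hrS, hrlt⟩ := exists_lt_of_csInf_lt (hSne a b) h3
    obtain ⟨v, hvn, rfl⟩ := hrS
    exact ⟨v, hvn, hrlt⟩
  -- comparison of Jfun for different parameters
  have hJcomp : ∀ a b a2 b2 : ℝ, ∀ w : X₀, Jfun T a2 b2 w = Jfun T a b w
      - ((a2 - a) * ‖Lp.posPart (T w)‖ ^ 2 + (b2 - b) * ‖Lp.negPart (T w)‖ ^ 2)/2 := by
    intro a b a2 b2 w
    show (⟪w, w⟫ - a2 * ‖Lp.posPart (T w)‖ ^ 2 - b2 * ‖Lp.negPart (T w)‖ ^ 2)/2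
      = (⟪w, w⟫ - a * ‖Lp.posPart (T w)‖ ^ 2 - b * ‖Lp.negPart (T w)‖ ^ 2)/2 - _
    ring
  -- Part 1
  have hpart1 : ∀ a₁ b₁ a₂ b₂ : ℝ, lk < a₁ → a₁ < a₂ → a₂ < lk1 → a₁ ≤ b₁ → a₂ ≤ b₂ →
      m a₁ b₁ = 0 → m a₂ b₂ = 0 → b₂ < b₁ := by
    intro a₁ b₁ a₂ b₂ h1 h12 h2k hab1 hab2 hm1 hm2
    by_contra hbc
    push_neg at hbc
    have h1' : lk < a₂ := lt_trans h1 h12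
    have hseq : ∀ j : ℕ, ∃ v : V₂, ‖T (v : X₀)‖ = 1 ∧
        Jfun T a₁ b₁ ((M a₁ b₁ v : X₀) + (v : X₀)) < 1/((j : ℝ)+1) := by
      intro j
      have h4 := hmnear a₁ b₁ h1 hab1 (1/((j : ℝ)+1)) (by positivity)
      rw [hm1, zero_add] at h4
      exact h4
    choose v hv1 hv2 using hseq
    have h0 : ∀ j, 0 ≤ Jfun T a₂ b₂ ((M a₂ b₂ (v j) : X₀) + (v j : X₀)) := by
      intro j
      have h5 := hmle a₂ b₂ h1' hab2 (v j) (hv1 j)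
      rw [hm2] at h5
      exact h5
    have hcmp : ∀ j, Jfun T a₂ b₂ ((M a₂ b₂ (v j) : X₀) + (v j : X₀)) ≤
        Jfun T a₁ b₁ ((M a₁ b₁ (v j) : X₀) + (v j : X₀))
        - (a₂ - a₁)/2 * ‖Lp.posPart (T ((M a₂ b₂ (v j) : X₀) + (v j : X₀)))‖ ^ 2 := by
      intro j
      have h6 := hJcomp a₁ b₁ a₂ b₂ ((M a₂ b₂ (v j) : X₀) + (v j : X₀))
      have h7 := hM a₁ b₁ h1 hab1 (v j) (M a₂ b₂ (v j))
      have h8 := mul_nonneg (sub_nonneg.mpr hbc)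
        (sq_nonneg ‖Lp.negPart (T ((M a₂ b₂ (v j) : X₀) + (v j : X₀)))‖)
      linarith
    have hJθ : ∀ j, Jfun T a₂ b₂ ((M a₂ b₂ (v j) : X₀) + (v j : X₀)) ≤ 1 := by
      intro j
      have h9 : 1/((j : ℝ)+1) ≤ 1 := by
        rw [div_le_one (by positivity)]; linarith [Nat.cast_nonneg (α := ℝ) j]
      have h10 := mul_nonneg (by linarith : (0:ℝ) ≤ (a₂ - a₁)/2)
        (sq_nonneg ‖Lp.posPart (T ((M a₂ b₂ (v j) : X₀) + (v j : X₀)))‖)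
      linarith [hcmp j, hv2 j]
    have hPsmall : ∀ j, ‖Lp.posPart (T ((M a₂ b₂ (v j) : X₀) + (v j : X₀)))‖ ^ 2 ≤
        2/(a₂ - a₁) * (1/((j : ℝ)+1)) := by
      intro j
      rw [div_mul_eq_mul_div, le_div_iff₀ (by linarith)]
      have := hcmp j
      have := hv2 j
      have := h0 j
      nlinarith [this]
    have hsgn : Tendsto (fun j => ‖Lp.posPart (T ((M a₂ b₂ (v j) : X₀) + (v j : X₀)))‖)
        atTop (𝓝 0) := by
      have hub : ∀ j, ‖Lp.posPart (T ((M a₂ b₂ (v j) : X₀) + (v j : X₀)))‖ ≤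
          Real.sqrt (2/(a₂ - a₁) * (1/((j : ℝ)+1))) := by
        intro j
        rw [← Real.sqrt_sq (norm_nonneg _)]
        exact Real.sqrt_le_sqrt (hPsmall j)
      have hlim : Tendsto (fun j : ℕ => Real.sqrt (2/(a₂ - a₁) * (1/((j : ℝ)+1)))) atTop
          (𝓝 0) := by
        have h11 : Tendsto (fun j : ℕ => 2/(a₂ - a₁) * (1/((j : ℝ)+1))) atTop
            (𝓝 (2/(a₂ - a₁) * 0)) :=
          tendsto_const_nhds.mul tendsto_one_div_add_atTop_nhds_zero_nat
        rw [mul_zero] at h11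
        have h12 := (Real.continuous_sqrt.tendsto 0).comp h11
        rwa [Real.sqrt_zero] at h12
      exact tendsto_of_tendsto_of_tendsto_of_le_of_le tendsto_const_nhds hlim
        (fun j => norm_nonneg _) hub
    exact masterPos T hlam1 hlam1k hV₂' hV₁b φ₁ hφ₁pos hφ₁eig hcpt M hM h1'
      (fun _ => a₂) (fun _ => b₂) v (fun _ => le_refl _) (fun _ => hab2) (fun _ => le_refl _)
      tendsto_const_nhds tendsto_const_nhds hv1 hJθ hsgn
  refine ⟨hpart1, ?_⟩
  -- Part 2
  intro Kc hKcpt hKsub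
  rcases Kc.eq_empty_or_nonempty with rfl | hne
  · exact ⟨0, le_refl 0, fun a₁ h => absurd h (Set.notMem_empty _)⟩
  set A₀ : ℝ := sInf Kc with hA₀def
  set A₁ : ℝ := sSup Kc with hA₁def
  have hA₀mem : A₀ ∈ Kc := hKcpt.sInf_mem hne
  have hA₁mem : A₁ ∈ Kc := hKcpt.sSup_mem hne
  have hA₀Ioo := hKsub hA₀mem
  have hA₁Ioo := hKsub hA₁mem
  obtain ⟨hA₀β, hmA₀⟩ := hβcurve A₀ hA₀Ioo.1 hA₀Ioo.2
  set B' : ℝ := βcurve A₀ with hB'def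
  have hβlbmem : ∀ x ∈ Kc, x ≤ βcurve x ∧ m x (βcurve x) = 0 :=
    fun x hx => hβcurve x (hKsub hx).1 (hKsub hx).2
  have hβub : ∀ x ∈ Kc, βcurve x ≤ B' := by
    intro x hx
    rcases eq_or_lt_of_le (csInf_le hKcpt.bddBelow hx : A₀ ≤ x) with heq | hlt
    · rw [← heq]
    · exact (hpart1 A₀ B' x (βcurve x) hA₀Ioo.1 hlt (hKsub hx).2 hA₀β
        (hβlbmem x hx).1 hmA₀ (hβlbmem x hx).2).le
  set Θ₂ : ℝ := (lk1 - A₀)/2 + 1 with hΘ₂def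
  have hΘ₂1 : 1 ≤ Θ₂ := by
    rw [hΘ₂def]; linarith [hA₀Ioo.2]
  -- the uniform lower bound for the negative part
  have hnegbound : ∃ c : ℝ, 0 < c ∧ ∀ a b : ℝ, ∀ v : V₂, A₀ ≤ a → a ≤ A₁ → a ≤ b → b ≤ B' →
      ‖T (v : X₀)‖ = 1 → Jfun T a b ((M a b v : X₀) + (v : X₀)) ≤ Θ₂ →
      c ≤ ‖Lp.negPart (T ((M a b v : X₀) + (v : X₀)))‖ ^ 2 := by
    by_contra hcon
    push_neg at hcon
    have hseq : ∀ j : ℕ, ∃ a b : ℝ, ∃ v : V₂, A₀ ≤ a ∧ a ≤ A₁ ∧ a ≤ b ∧ b ≤ B' ∧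
        ‖T (v : X₀)‖ = 1 ∧ Jfun T a b ((M a b v : X₀) + (v : X₀)) ≤ Θ₂ ∧
        ‖Lp.negPart (T ((M a b v : X₀) + (v : X₀)))‖ ^ 2 < 1/((j : ℝ)+1) := by
      intro j
      obtain ⟨a, b, v, h1, h2, h3, h4, h5, h6, h7⟩ := hcon (1/((j : ℝ)+1)) (by positivity)
      exact ⟨a, b, v, h1, h2, h3, h4, h5, h6, h7⟩
    choose aa bb vv hs1 hs2 hs3 hs4 hs5 hs6 hs7 using hseq
    obtain ⟨a', ha'mem, σ₁, hσ₁, hca⟩ :=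
      (isCompact_Icc (a := A₀) (b := A₁)).tendsto_subseq (x := aa) (fun j => ⟨hs1 j, hs2 j⟩)
    obtain ⟨b', hb'mem, σ₂, hσ₂, hcb⟩ :=
      (isCompact_Icc (a := A₀) (b := B')).tendsto_subseq (x := fun j => bb (σ₁ j))
        (fun j => ⟨le_trans (hs1 _) (hs3 _), hs4 _⟩)
    have hτ : StrictMono (fun j => σ₁ (σ₂ j)) := hσ₁.comp hσ₂
    have hsgn2 : Tendsto (fun j =>
        ‖Lp.negPart (T ((M (aa (σ₁ (σ₂ j))) (bb (σ₁ (σ₂ j))) (vv (σ₁ (σ₂ j))) : X₀)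
          + (vv (σ₁ (σ₂ j)) : X₀)))‖) atTop (𝓝 0) := by
      have hub : ∀ j, ‖Lp.negPart (T ((M (aa (σ₁ (σ₂ j))) (bb (σ₁ (σ₂ j)))
          (vv (σ₁ (σ₂ j))) : X₀) + (vv (σ₁ (σ₂ j)) : X₀)))‖ ≤
          Real.sqrt (1/((j : ℝ)+1)) := by
        intro j
        rw [← Real.sqrt_sq (norm_nonneg _)]
        apply Real.sqrt_le_sqrt
        refine le_trans (hs7 _).le ?_
        have h14 : j ≤ σ₁ (σ₂ j) := hτ.le_apply
        have h13 : (j : ℝ) + 1 ≤ (σ₁ (σ₂ j) : ℝ) + 1 := by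
          have h15 : (j : ℝ) ≤ (σ₁ (σ₂ j) : ℝ) := Nat.cast_le.mpr h14
          linarith
        exact one_div_le_one_div_of_le (by positivity) h13
      have hlim : Tendsto (fun j : ℕ => Real.sqrt (1/((j : ℝ)+1))) atTop (𝓝 0) := by
        have h12 := (Real.continuous_sqrt.tendsto 0).comp
          tendsto_one_div_add_atTop_nhds_zero_nat
        rwa [Real.sqrt_zero] at h12
      exact tendsto_of_tendsto_of_tendsto_of_le_of_le tendsto_const_nhds hlim
        (fun j => norm_nonneg _) hub
    exact masterNeg T hlam1 hlam1k hV₂' hV₁b φ₁ hφ₁pos hφ₁eig hcpt M hM hA₀Ioo.1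
      (fun j => aa (σ₁ (σ₂ j))) (fun j => bb (σ₁ (σ₂ j))) (fun j => vv (σ₁ (σ₂ j)))
      (fun j => hs1 _) (fun j => hs3 _) (fun j => hs4 _)
      (hca.comp hσ₂.tendsto_atTop) hcb (fun j => hs5 _) (fun j => hs6 _) hsgn2
  obtain ⟨cneg, hcneg0, hneg⟩ := hnegbound
  set CU : ℝ := (B' - A₀)/(A₀ - lk) with hCUdef
  have hCU0 : 0 ≤ CU := div_nonneg (by linarith) (by linarith [hA₀Ioo.1])
  -- bound for the maximizer component
  have hMB : ∀ a b : ℝ, ∀ v : V₂, lk < a → a ≤ b → ‖T (v : X₀)‖ = 1 →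
      (a - lk) * ‖T ((M a b v : X₀))‖ ^ 2 ≤ b - a := by
    intro a b v h1 h2 hvn
    have h0 := hM a b h1 h2 v 0
    rw [show ((0 : V₁) : X₀) = 0 from rfl, zero_add] at h0
    have ho := hV₂' (v : X₀) v.2 ((M a b v : X₀)) (M a b v).2
    have hub := hV₁b ((M a b v : X₀)) (M a b v).2
    have hsplitv := myPosPart_negPart_norm (T (v : X₀))
    rw [hvn] at hsplitv
    have hsplitW : ‖Lp.posPart (T ((M a b v : X₀) + (v : X₀)))‖ ^ 2
        + ‖Lp.negPart (T ((M a b v : X₀) + (v : X₀)))‖ ^ 2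
        = ‖T ((M a b v : X₀))‖ ^ 2 + 1 := by
      rw [myPosPart_negPart_norm, map_add, norm_add_sq_real, ho.2, hvn]; ring
    have hiWW : ⟪(M a b v : X₀) + (v : X₀), (M a b v : X₀) + (v : X₀)⟫
        = ⟪(M a b v : X₀), (M a b v : X₀)⟫ + ⟪(v : X₀), (v : X₀)⟫ := by
      rw [real_inner_add_add_self, ho.1]; ring
    have hJv : Jfun T a b ((v : X₀)) = (⟪(v : X₀), (v : X₀)⟫
        - a * ‖Lp.posPart (T (v : X₀))‖ ^ 2 - b * ‖Lp.negPart (T (v : X₀))‖ ^ 2)/2 := rfl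
    have hJW : Jfun T a b ((M a b v : X₀) + (v : X₀)) = (⟪(M a b v : X₀) + (v : X₀),
        (M a b v : X₀) + (v : X₀)⟫ - a * ‖Lp.posPart (T ((M a b v : X₀) + (v : X₀)))‖ ^ 2
        - b * ‖Lp.negPart (T ((M a b v : X₀) + (v : X₀)))‖ ^ 2)/2 := rfl
    rw [hJv, hJW, hiWW] at h0
    have e2a : a * (‖Lp.posPart (T ((M a b v : X₀) + (v : X₀)))‖ ^ 2
        + ‖Lp.negPart (T ((M a b v : X₀) + (v : X₀)))‖ ^ 2)
        = a * (‖T ((M a b v : X₀))‖ ^ 2 + 1) := by rw [hsplitW]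
    have e1b : b * (‖Lp.posPart (T (v : X₀))‖ ^ 2 + ‖Lp.negPart (T (v : X₀))‖ ^ 2)
        = b * 1 ^ 2 := by rw [hsplitv]
    linarith [h0, hub, e2a, e1b,
      mul_nonneg (sub_nonneg.mpr h2) (sq_nonneg ‖Lp.posPart (T (v : X₀))‖),
      mul_nonneg (sub_nonneg.mpr h2) (sq_nonneg ‖Lp.negPart (T ((M a b v : X₀) + (v : X₀)))‖)]
  have hPbound : ∀ a b : ℝ, ∀ v : V₂, lk < a → a ≤ b → ‖T (v : X₀)‖ = 1 → A₀ ≤ a → b ≤ B' →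
      ‖Lp.posPart (T ((M a b v : X₀) + (v : X₀)))‖ ^ 2 ≤ CU + 1 := by
    intro a b v h1 h2 hvn hA₀a hbB'
    have hk := hMB a b v h1 h2 hvn
    have hTu : ‖T ((M a b v : X₀))‖ ^ 2 ≤ CU := by
      rw [hCUdef, le_div_iff₀ (by linarith [hA₀Ioo.1])]
      nlinarith [sq_nonneg ‖T ((M a b v : X₀))‖]
    have ho := hV₂' (v : X₀) v.2 ((M a b v : X₀)) (M a b v).2
    have hsplitW : ‖Lp.posPart (T ((M a b v : X₀) + (v : X₀)))‖ ^ 2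
        + ‖Lp.negPart (T ((M a b v : X₀) + (v : X₀)))‖ ^ 2
        = ‖T ((M a b v : X₀))‖ ^ 2 + 1 := by
      rw [myPosPart_negPart_norm, map_add, norm_add_sq_real, ho.2, hvn]; ring
    nlinarith [sq_nonneg ‖Lp.negPart (T ((M a b v : X₀) + (v : X₀)))‖]
  -- the key estimate for ordered pairs
  have key : ∀ x ∈ Kc, ∀ y ∈ Kc, x < y →
      βcurve x - βcurve y ≤ (CU + 1)/cneg * (y - x) := by
    intro x hx y hy hxy
    obtain ⟨hxβ, hmx⟩ := hβlbmem x hx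
    obtain ⟨hyβ, hmy⟩ := hβlbmem y hy
    have hlkx : lk < x := (hKsub hx).1
    have hlky : lk < y := (hKsub hy).1
    have hβyx : βcurve y < βcurve x :=
      hpart1 x (βcurve x) y (βcurve y) hlkx hxy (hKsub hy).2 hxβ hyβ hmx hmy
    have hyβx : y ≤ βcurve x := le_trans hyβ hβyx.le
    have hβxB' : βcurve x ≤ B' := hβub x hx
    have hA₀y : A₀ ≤ y := csInf_le hKcpt.bddBelow hy
    have hyA₁ : y ≤ A₁ := le_csSup hKcpt.bddAbove hy
    have hA₀x : A₀ ≤ x := csInf_le hKcpt.bddBelow hx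
    -- E1 : m y (βcurve x) ≤ -((βcurve x - βcurve y) * cneg / 2)
    have hE1 : m y (βcurve x) ≤ -((βcurve x - βcurve y) * cneg / 2) := by
      refine le_of_forall_pos_le_add ?_
      intro ε hε
      obtain ⟨v, hvn, hvJ⟩ := hmnear y (βcurve y) hlky hyβ (min ε 1) (by positivity)
      rw [hmy, zero_add] at hvJ
      have hJ' := hJcomp y (βcurve y) y (βcurve x)
        ((M y (βcurve x) v : X₀) + (v : X₀))
      have hmax' := hM y (βcurve y) hlky hyβ v (M y (βcurve x) v)
      have hNnn := sq_nonneg ‖Lp.negPart (T ((M y (βcurve x) v : X₀) + (v : X₀)))‖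
      have hPnn := sq_nonneg ‖Lp.posPart (T ((M y (βcurve x) v : X₀) + (v : X₀)))‖
      have hθ : Jfun T y (βcurve x) ((M y (βcurve x) v : X₀) + (v : X₀)) ≤ Θ₂ := by
        nlinarith [hvJ, min_le_right ε 1, mul_nonneg (by linarith : (0:ℝ) ≤ βcurve x - βcurve y) hNnn]
      have hcneg := hneg y (βcurve x) v hA₀y hyA₁ hyβx hβxB' hvn hθ
      have hmle' := hmle y (βcurve x) hlky hyβx v hvn
      have hprod : (βcurve x - βcurve y) * cneg ≤ (βcurve x - βcurve y) *
          ‖Lp.negPart (T ((M y (βcurve x) v : X₀) + (v : X₀)))‖ ^ 2 :=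
        mul_le_mul_of_nonneg_left hcneg (by linarith)
      have hεm : min ε 1 ≤ ε := min_le_left ε 1
      linarith
    -- E2 : -((y - x) * (CU + 1) / 2) ≤ m y (βcurve x)
    have hE2 : -((y - x) * (CU + 1) / 2) ≤ m y (βcurve x) := by
      rw [hm y (βcurve x) hlky hyβx]
      refine le_csInf (hSne _ _) ?_
      intro r hr
      obtain ⟨v, hvn, rfl⟩ := hr
      have hmaxy := hM y (βcurve x) hlky hyβx v (M x (βcurve x) v)
      have hcmp := hJcomp x (βcurve x) y (βcurve x)
        ((M x (βcurve x) v : X₀) + (v : X₀))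
      have h0x : 0 ≤ Jfun T x (βcurve x) ((M x (βcurve x) v : X₀) + (v : X₀)) := by
        have h5 := hmle x (βcurve x) hlkx hxβ v hvn
        rw [hmx] at h5
        exact h5
      have hPb := hPbound x (βcurve x) v hlkx hxβ hvn hA₀x hβxB'
      have hyx : (0:ℝ) ≤ y - x := by linarith
      have hprod2 : (y - x) * ‖Lp.posPart (T ((M x (βcurve x) v : X₀) + (v : X₀)))‖ ^ 2
          ≤ (y - x) * (CU + 1) := mul_le_mul_of_nonneg_left hPb hyx
      linarith
    rw [div_mul_eq_mul_div, le_div_iff₀ hcneg0]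
    linarith
  refine ⟨(CU + 1)/cneg, div_nonneg (by linarith) hcneg0.le, ?_⟩
  intro x hx y hy
  rcases lt_trichotomy x y with hlt | heq | hgt
  · have h1 := key x hx y hy hlt
    have h2 : βcurve y < βcurve x := by
      obtain ⟨hxβ, hmx⟩ := hβlbmem x hx
      obtain ⟨hyβ, hmy⟩ := hβlbmem y hy
      exact hpart1 x (βcurve x) y (βcurve y) (hKsub hx).1 hlt (hKsub hy).2 hxβ hyβ hmx hmy
    rw [abs_of_neg (by linarith), abs_of_pos (by linarith)]
    linarith
  · rw [heq]; simp
  · have h1 := key y hy x hx hgt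
    have h2 : βcurve x < βcurve y := by
      obtain ⟨hxβ, hmx⟩ := hβlbmem x hx
      obtain ⟨hyβ, hmy⟩ := hβlbmem y hy
      exact hpart1 y (βcurve y) x (βcurve x) (hKsub hy).1 hgt (hKsub hx).2 hyβ hxβ hmy hmx
    rw [abs_of_pos (by linarith), abs_of_neg (by linarith)]
    linarith
end

section
/- Let c ∈ ℝ and let (α,β) ∈ ℝ² be such that (α,β) ∉ Σ_K, i.e. the only weak solution of the Fučik equation for (α,β) is the trivial one. If (u_j) is a sequence in X₀ with E_{α,β}(u_j) ≤ c for all j and sup{|⟨E_{α,β}'(u_j), φ⟩| : φ ∈ X₀, ‖φ‖ = 1} → 0 as j → ∞, then (u_j) is bounded in X₀. -/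
open MeasureTheory RealInnerProductSpace Filter Topology

section Aux
variable {A : Type*} [MeasurableSpace A] {μ : Measure A}

lemma myPosPart_smul (r : ℝ) (hr : 0 ≤ r) (a : Lp ℝ 2 μ) :
    Lp.posPart (r • a) = r • Lp.posPart a := by
  apply Lp.ext
  filter_upwards [Lp.coeFn_posPart (r • a), Lp.coeFn_smul r a,
    Lp.coeFn_smul r (Lp.posPart a), Lp.coeFn_posPart a] with x h1 h2 h3 h4
  rw [h1, h2, h3, Pi.smul_apply, Pi.smul_apply, h4, smul_eq_mul, smul_eq_mul,
    mul_max_of_nonneg _ _ hr, mul_zero]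

lemma myNegPart_smul (r : ℝ) (hr : 0 ≤ r) (a : Lp ℝ 2 μ) :
    Lp.negPart (r • a) = r • Lp.negPart a := by
  rw [Lp.negPart, Lp.negPart, ← smul_neg, myPosPart_smul r hr]

lemma myPosPart_zero : Lp.posPart (0 : Lp ℝ 2 μ) = 0 := by
  have := myPosPart_smul (0 : ℝ) le_rfl (0 : Lp ℝ 2 μ)
  simpa using this

lemma myNegPart_zero : Lp.negPart (0 : Lp ℝ 2 μ) = 0 := by
  rw [Lp.negPart, neg_zero, myPosPart_zero]

lemma myInner_posPart (a : Lp ℝ 2 μ) : ⟪Lp.posPart a, a⟫ = ‖Lp.posPart a‖ ^ 2 := by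
  rw [← real_inner_self_eq_norm_sq, L2.inner_def, L2.inner_def]
  apply integral_congr_ae
  filter_upwards [Lp.coeFn_posPart a] with x h1
  rw [h1]
  simp only [RCLike.inner_apply, conj_trivial]
  rcases le_total (a x) 0 with hx | hx
  · rw [max_eq_right hx]; ring
  · rw [max_eq_left hx]

lemma myInner_negPart (a : Lp ℝ 2 μ) : ⟪Lp.negPart a, a⟫ = -‖Lp.negPart a‖ ^ 2 := by
  rw [← real_inner_self_eq_norm_sq, L2.inner_def, L2.inner_def, ← integral_neg]
  apply integral_congr_ae
  filter_upwards [Lp.coeFn_negPart_eq_max a] with x h1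
  rw [h1]
  simp only [RCLike.inner_apply, conj_trivial]
  rcases le_total (a x) 0 with hx | hx
  · rw [max_eq_left (by linarith)]; ring
  · rw [max_eq_right (by linarith)]; ring

end Aux

/-- The pairing `⟨J'_{α,β}(u), v⟩ = B(u,v) - α∫_Ω u⁺v + β∫_Ω u⁻v` of the Fréchet
derivative of `J_{α,β}`. -/
noncomputable def DJfun {Ω : Type*} [MeasurableSpace Ω] {μ : Measure Ω}
    {X₀ : Type*} [NormedAddCommGroup X₀] [InnerProductSpace ℝ X₀]
    (T : X₀ →ₗ[ℝ] Lp ℝ 2 μ) (α β : ℝ) (u v : X₀) : ℝ :=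
  ⟪u, v⟫ - α * ⟪Lp.posPart (T u), T v⟫ + β * ⟪Lp.negPart (T u), T v⟫

/-- The functional `E_{α,β}(u) = J_{α,β}(u) - ∫_Ω (F(u) + h u)`, with `F(t) = ∫₀ᵗ f`. -/
noncomputable def Efun {Ω : Type*} [MeasurableSpace Ω] {μ : Measure Ω}
    {X₀ : Type*} [NormedAddCommGroup X₀] [InnerProductSpace ℝ X₀]
    (T : X₀ →ₗ[ℝ] Lp ℝ 2 μ) (f : ℝ → ℝ) (h : Lp ℝ 2 μ) (α β : ℝ) (u : X₀) : ℝ :=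
  Jfun T α β u - ∫ x, ((∫ τ in (0:ℝ)..((T u) x), f τ) + h x * (T u) x) ∂μ

/-- The pairing `⟨E'_{α,β}(u), v⟩ = ⟨J'_{α,β}(u), v⟩ - ∫_Ω (f(u)+h) v`. -/
noncomputable def DEfun {Ω : Type*} [MeasurableSpace Ω] {μ : Measure Ω}
    {X₀ : Type*} [NormedAddCommGroup X₀] [InnerProductSpace ℝ X₀]
    (T : X₀ →ₗ[ℝ] Lp ℝ 2 μ) (f : ℝ → ℝ) (h : Lp ℝ 2 μ) (α β : ℝ) (u v : X₀) : ℝ :=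
  DJfun T α β u v - ∫ x, (f ((T u) x) + h x) * (T v) x ∂μ

/-- `u` is a weak solution of the Fučik equation `-L_K u = α u⁺ - β u⁻` for `(α,β)`:
`B(u,v) = ∫_Ω (α u⁺ - β u⁻) v` for all `v ∈ X₀`.  The pair `(α,β)` belongs to the Fučik
spectrum `Σ_K` iff this has a nontrivial solution. -/
noncomputable def FucikSol {Ω : Type*} [MeasurableSpace Ω] {μ : Measure Ω}
    {X₀ : Type*} [NormedAddCommGroup X₀] [InnerProductSpace ℝ X₀]
    (T : X₀ →ₗ[ℝ] Lp ℝ 2 μ) (α β : ℝ) (u : X₀) : Prop :=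
  ∀ v : X₀, ⟪u, v⟫ = α * ⟪Lp.posPart (T u), T v⟫ - β * ⟪Lp.negPart (T u), T v⟫

set_option maxHeartbeats 1000000 in
theorem stmt_16
    {n : ℕ} {s : ℝ} (hs0 : 0 < s) (hs1 : s < 1) (hns : 2 * s < (n : ℝ))
    {Ωs : Set (EuclideanSpace ℝ (Fin n))} (hΩb : Bornology.IsBounded Ωs)
    (hΩm : MeasurableSet Ωs)
    {K : EuclideanSpace ℝ (Fin n) → ℝ} (hKpos : ∀ x, x ≠ 0 → 0 < K x)
    (hK1 : Integrable (fun x => min (‖x‖ ^ 2) 1 * K x))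
    (hK2 : ∃ lam > 0, ∀ x, x ≠ 0 → lam * ‖x‖ ^ (-((n : ℝ) + 2 * s)) ≤ K x)
    (hK3 : ∀ x, K (-x) = K x)
    {X₀ : Type*} [NormedAddCommGroup X₀] [InnerProductSpace ℝ X₀] [CompleteSpace X₀]
    (T : X₀ →ₗ[ℝ] Lp ℝ 2 (volume.restrict Ωs)) (hT : Function.Injective T)
    (f : ℝ → ℝ) (hfc : Continuous f) (hfb : ∃ Mf : ℝ, ∀ t : ℝ, |f t| ≤ Mf)
    (h : Lp ℝ 2 (volume.restrict Ωs))
    (hcpt : ∀ (u : ℕ → X₀) (C : ℝ), (∀ j, ‖u j‖ ≤ C) →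
      ∃ (w : Lp ℝ 2 (volume.restrict Ωs)) (σ : ℕ → ℕ), StrictMono σ ∧
        Tendsto (fun j => ‖T (u (σ j)) - w‖) atTop (nhds 0))
    {α β : ℝ} (c : ℝ)
    (hnotspec : ¬∃ u : X₀, u ≠ 0 ∧ FucikSol T α β u)
    (u : ℕ → X₀) (hEb : ∀ j, Efun T f h α β (u j) ≤ c)
    (hPS : ∀ ε > 0, ∃ N : ℕ, ∀ j ≥ N, ∀ φ : X₀, ‖φ‖ = 1 → |DEfun T f h α β (u j) φ| ≤ ε)
    :
    ∃ C : ℝ, ∀ j, ‖u j‖ ≤ C := by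
  classical
  haveI : IsFiniteMeasure (volume.restrict Ωs) := by
    constructor
    rw [Measure.restrict_apply_univ]
    exact hΩb.measure_lt_top
  obtain ⟨Mf, hMf⟩ := hfb
  -- T is bounded
  have hTb : ∃ CT : ℝ, 0 ≤ CT ∧ ∀ x, ‖T x‖ ≤ CT * ‖x‖ := by
    by_contra hc
    push_neg at hc
    have hex : ∀ j : ℕ, ∃ y : X₀, ‖y‖ = 1 ∧ (j : ℝ) < ‖T y‖ := by
      intro j
      obtain ⟨x, hx⟩ := hc (j : ℝ) (Nat.cast_nonneg j)
      have hx0 : x ≠ 0 := by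
        rintro rfl
        rw [map_zero, norm_zero, norm_zero, mul_zero] at hx
        exact absurd hx (lt_irrefl 0)
      refine ⟨‖x‖⁻¹ • x, ?_, ?_⟩
      · rw [norm_smul, norm_inv, norm_norm, inv_mul_cancel₀ (norm_ne_zero_iff.mpr hx0)]
      · rw [T.map_smul, norm_smul, norm_inv, norm_norm,
          lt_inv_mul_iff₀ (norm_pos_iff.mpr hx0), mul_comm]
        exact hx
    choose y hy1 hy2 using hex
    obtain ⟨w, σ, hσ, htend⟩ := hcpt y 1 (fun j => (hy1 j).le)
    have h1 : Tendsto (fun j => T (y (σ j))) atTop (𝓝 w) := by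
      rwa [tendsto_iff_norm_sub_tendsto_zero]
    have h2 : Tendsto (fun j => ‖T (y (σ j))‖) atTop (𝓝 ‖w‖) := h1.norm
    have h3 : Tendsto (fun j => ‖T (y (σ j))‖) atTop atTop := by
      apply tendsto_atTop_mono (fun j => ?_) tendsto_natCast_atTop_atTop
      exact le_trans (Nat.cast_le.mpr (hσ.le_apply)) (hy2 (σ j)).le
    exact (not_tendsto_atTop_of_tendsto_nhds h2) h3
  obtain ⟨CT, hCT0, hCT⟩ := hTb
  -- the nonlinear part as an L² element
  have hmem : ∀ a : X₀, MemLp (fun x => f ((T a) x)) 2 (volume.restrict Ωs) := by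
    intro a
    refine MemLp.of_bound (hfc.comp_aestronglyMeasurable (Lp.aestronglyMeasurable (T a))) Mf ?_
    exact Eventually.of_forall fun x => by simpa [Real.norm_eq_abs] using hMf ((T a) x)
  set G : X₀ → Lp ℝ 2 (volume.restrict Ωs) := fun a => (hmem a).toLp _ + h with hGdef
  set M0 : ℝ := (((volume.restrict Ωs) Set.univ) ^ (2 : ENNReal).toReal⁻¹
    * ENNReal.ofReal Mf).toReal with hM0def
  have hGnorm : ∀ a : X₀, ‖G a‖ ≤ M0 + ‖h‖ := by
    intro a
    refine le_trans (norm_add_le _ _) (add_le_add_left ?_ _)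
    rw [Lp.norm_toLp _ (hmem a)]
    have hfin : ((volume.restrict Ωs) Set.univ) ^ (2 : ENNReal).toReal⁻¹
        * ENNReal.ofReal Mf ≠ ⊤ :=
      ENNReal.mul_ne_top (ENNReal.rpow_ne_top_of_nonneg (by positivity)
        (measure_ne_top _ _)) ENNReal.ofReal_ne_top
    refine (ENNReal.toReal_le_toReal (hmem a).eLpNorm_ne_top hfin).mpr ?_
    refine le_trans (eLpNorm_le_of_ae_bound
      (Eventually.of_forall fun x => by simpa [Real.norm_eq_abs] using hMf ((T a) x))) ?_
    simp [one_div]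
  have hGint : ∀ a φ : X₀,
      ∫ x, (f ((T a) x) + h x) * (T φ) x ∂(volume.restrict Ωs) = ⟪G a, T φ⟫ := by
    intro a φ
    rw [L2.inner_def]
    apply integral_congr_ae
    filter_upwards [Lp.coeFn_add ((hmem a).toLp _) h, MemLp.coeFn_toLp (hmem a)] with x h1 h2
    simp only [RCLike.inner_apply, conj_trivial, hGdef]
    rw [h1, Pi.add_apply, h2, mul_comm]
  -- contradiction setup
  by_contra hC
  push_neg at hC
  have hex : ∀ k : ℕ, ∃ j : ℕ, k < j ∧ (k : ℝ) < ‖u j‖ := by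
    intro k
    obtain ⟨j, hj⟩ := hC (max (k : ℝ) ((Finset.range (k + 1)).sup' ⟨0, by simp⟩ fun i => ‖u i‖))
    refine ⟨j, ?_, lt_of_le_of_lt (le_max_left _ _) hj⟩
    by_contra hjk
    push_neg at hjk
    have : ‖u j‖ ≤ (Finset.range (k + 1)).sup' ⟨0, by simp⟩ fun i => ‖u i‖ :=
      Finset.le_sup' (fun i => ‖u i‖) (Finset.mem_range.mpr (Nat.lt_succ_of_le hjk))
    exact absurd hj (not_lt.mpr (le_trans this (le_max_right _ _)))
  choose g hg1 hg2 using hex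
  have hr0 : ∀ k, 0 < ‖u (g k)‖ := fun k => lt_of_le_of_lt (Nat.cast_nonneg k) (hg2 k)
  set v : ℕ → X₀ := fun k => ‖u (g k)‖⁻¹ • u (g k) with hvdef
  have hv1 : ∀ k, ‖v k‖ = 1 := by
    intro k
    rw [hvdef]
    simp only [norm_smul, norm_inv, norm_norm]
    exact inv_mul_cancel₀ (hr0 k).ne'
  obtain ⟨w, σ, hσ, htend⟩ := hcpt v 1 (fun k => (hv1 k).le)
  have hTV : Tendsto (fun k => T (v (σ k))) atTop (𝓝 w) := by
    rwa [tendsto_iff_norm_sub_tendsto_zero]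
  set V : ℕ → X₀ := fun k => v (σ k) with hVdef
  set R : ℕ → ℝ := fun k => ‖u (g (σ k))‖ with hRdef
  have hR0 : ∀ k, 0 < R k := fun k => hr0 (σ k)
  have hRk : ∀ k : ℕ, (k : ℝ) < R k := fun k =>
    lt_of_le_of_lt (Nat.cast_le.mpr hσ.le_apply) (hg2 (σ k))
  have hRtop : Tendsto R atTop atTop :=
    tendsto_atTop_mono (fun k => (hRk k).le) tendsto_natCast_atTop_atTop
  have hu_eq : ∀ k, u (g (σ k)) = R k • V k := by
    intro k
    rw [hVdef, hvdef]
    simp only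
    rw [smul_smul, mul_inv_cancel₀ (hR0 k).ne', one_smul]
  -- DEfun rewritten
  set S : ℕ → X₀ → ℝ := fun k φ =>
    ⟪V k, φ⟫ - α * ⟪Lp.posPart (T (V k)), T φ⟫ + β * ⟪Lp.negPart (T (V k)), T φ⟫ with hSdef
  have hDE : ∀ k φ, DEfun T f h α β (u (g (σ k))) φ
      = R k * S k φ - ⟪G (u (g (σ k))), T φ⟫ := by
    intro k φ
    have h1 : T (u (g (σ k))) = R k • T (V k) := by rw [hu_eq k, T.map_smul]
    have h2 : ⟪u (g (σ k)), φ⟫ = R k * ⟪V k, φ⟫ := by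
      rw [hu_eq k, real_inner_smul_left]
    have h3 : ⟪Lp.posPart (T (u (g (σ k)))), T φ⟫ = R k * ⟪Lp.posPart (T (V k)), T φ⟫ := by
      rw [h1, myPosPart_smul _ (hR0 k).le, real_inner_smul_left]
    have h4 : ⟪Lp.negPart (T (u (g (σ k)))), T φ⟫ = R k * ⟪Lp.negPart (T (V k)), T φ⟫ := by
      rw [h1, myNegPart_smul _ (hR0 k).le, real_inner_smul_left]
    rw [DEfun, DJfun, hGint, h2, h3, h4]
    simp only [hSdef]
    ring
  have hSsmul : ∀ k (t : ℝ) φ, S k (t • φ) = t * S k φ := by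
    intro k t φ
    simp only [hSdef, T.map_smul, real_inner_smul_right]
    ring
  obtain ⟨N₁, hN₁⟩ := hPS 1 one_pos
  -- key bound on S
  have hSb : ∀ φ : X₀, ∀ k, g (σ k) ≥ N₁ →
      |S k φ| ≤ (1 + (M0 + ‖h‖) * CT) * ‖φ‖ / R k := by
    intro φ k hk
    rcases eq_or_ne φ 0 with rfl | hφ0
    · have hz : S k 0 = 0 := by
        simp [hSdef]
      rw [hz, norm_zero, abs_zero, mul_zero, zero_div]
    · have hn0 : ‖φ‖ ≠ 0 := norm_ne_zero_iff.mpr hφ0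
      have hDE1 : |DEfun T f h α β (u (g (σ k))) φ| ≤ ‖φ‖ := by
        have hunit : ‖(‖φ‖⁻¹ • φ)‖ = 1 := by
          rw [norm_smul, norm_inv, norm_norm, inv_mul_cancel₀ hn0]
        have hle := hN₁ (g (σ k)) hk (‖φ‖⁻¹ • φ) hunit
        have hlin : DEfun T f h α β (u (g (σ k))) (‖φ‖⁻¹ • φ)
            = ‖φ‖⁻¹ * DEfun T f h α β (u (g (σ k))) φ := by
          rw [hDE, hDE, hSsmul, T.map_smul, real_inner_smul_right]
          ring
        rw [hlin, abs_mul, abs_inv, abs_norm] at hle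
        calc |DEfun T f h α β (u (g (σ k))) φ|
            = ‖φ‖ * (‖φ‖⁻¹ * |DEfun T f h α β (u (g (σ k))) φ|) := by
              field_simp
          _ ≤ ‖φ‖ * 1 := mul_le_mul_of_nonneg_left hle (norm_nonneg _)
          _ = ‖φ‖ := mul_one _
      have hG1 : |⟪G (u (g (σ k))), T φ⟫| ≤ (M0 + ‖h‖) * (CT * ‖φ‖) := by
        refine le_trans (abs_real_inner_le_norm _ _) ?_
        exact mul_le_mul (hGnorm _) (hCT φ) (norm_nonneg _)
          (le_trans (norm_nonneg (G (u (g (σ k))))) (hGnorm _))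
      have hSeq : S k φ = (DEfun T f h α β (u (g (σ k))) φ
          + ⟪G (u (g (σ k))), T φ⟫) / R k := by
        rw [hDE, sub_add_cancel, mul_comm, mul_div_assoc, div_self (hR0 k).ne', mul_one]
      rw [hSeq, abs_div, abs_of_pos (hR0 k), div_eq_mul_inv, div_eq_mul_inv]
      refine mul_le_mul_of_nonneg_right ?_ (inv_nonneg.mpr (hR0 k).le)
      calc |DEfun T f h α β (u (g (σ k))) φ + ⟪G (u (g (σ k))), T φ⟫|
          ≤ |DEfun T f h α β (u (g (σ k))) φ| + |⟪G (u (g (σ k))), T φ⟫| := abs_add_le _ _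
        _ ≤ ‖φ‖ + (M0 + ‖h‖) * (CT * ‖φ‖) := add_le_add hDE1 hG1
        _ = (1 + (M0 + ‖h‖) * CT) * ‖φ‖ := by ring
  have hgN : ∀ᶠ k in atTop, g (σ k) ≥ N₁ := by
    filter_upwards [eventually_ge_atTop N₁] with k hk
    exact le_trans hk (le_trans hσ.le_apply (hg1 (σ k)).le)
  -- S k φ → 0 for fixed φ
  have hStend : ∀ φ : X₀, Tendsto (fun k => S k φ) atTop (𝓝 0) := by
    intro φ
    apply squeeze_zero_norm' ?_ (Tendsto.div_atTop
      (tendsto_const_nhds (x := (1 + (M0 + ‖h‖) * CT) * ‖φ‖)) hRtop)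
    filter_upwards [hgN] with k hk
    exact hSb φ k hk
  -- limits of the bilinear pieces
  have hPtend : ∀ z : Lp ℝ 2 (volume.restrict Ωs),
      Tendsto (fun k => ⟪Lp.posPart (T (V k)), z⟫) atTop (𝓝 ⟪Lp.posPart w, z⟫) :=
    fun z => Tendsto.inner ((Lp.continuous_posPart.tendsto w).comp hTV) tendsto_const_nhds
  have hNtend : ∀ z : Lp ℝ 2 (volume.restrict Ωs),
      Tendsto (fun k => ⟪Lp.negPart (T (V k)), z⟫) atTop (𝓝 ⟪Lp.negPart w, z⟫) :=
    fun z => Tendsto.inner ((Lp.continuous_negPart.tendsto w).comp hTV) tendsto_const_nhds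
  -- weak limit of V
  set Tc : X₀ →L[ℝ] Lp ℝ 2 (volume.restrict Ωs) := LinearMap.mkContinuous T CT hCT with hTcdef
  have hTcapp : ∀ x, Tc x = T x := fun x => rfl
  set vv : X₀ := (InnerProductSpace.toDual ℝ X₀).symm
    ((α • ((innerSL ℝ (Lp.posPart w)).comp Tc)) - (β • ((innerSL ℝ (Lp.negPart w)).comp Tc)))
    with hvvdef
  have hvv : ∀ φ : X₀, ⟪vv, φ⟫ = α * ⟪Lp.posPart w, T φ⟫ - β * ⟪Lp.negPart w, T φ⟫ := by
    intro φ
    rw [hvvdef, InnerProductSpace.toDual_symm_apply]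
    simp [hTcapp, smul_eq_mul]
  have hVweak : ∀ φ : X₀, Tendsto (fun k => ⟪V k, φ⟫) atTop (𝓝 ⟪vv, φ⟫) := by
    intro φ
    have heq : ∀ k, ⟪V k, φ⟫ = S k φ + α * ⟪Lp.posPart (T (V k)), T φ⟫
        - β * ⟪Lp.negPart (T (V k)), T φ⟫ := by
      intro k
      simp only [hSdef]
      ring
    rw [hvv φ]
    have hlim := ((hStend φ).add (((hPtend (T φ)).const_mul α))).sub
      ((hNtend (T φ)).const_mul β)
    rw [zero_add] at hlim
    exact hlim.congr fun k => (heq k).symm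
  -- T vv = w
  have hTvv : T vv = w := by
    have hz : ∀ z : Lp ℝ 2 (volume.restrict Ωs), ⟪z, T vv⟫ = ⟪z, w⟫ := by
      intro z
      have h1 : Tendsto (fun k => ⟪z, T (V k)⟫) atTop (𝓝 ⟪z, w⟫) :=
        Tendsto.inner tendsto_const_nhds hTV
      have h4 : ∀ x : X₀, ⟪x, ContinuousLinearMap.adjoint Tc z⟫ = ⟪z, T x⟫ := by
        intro x
        rw [real_inner_comm, ContinuousLinearMap.adjoint_inner_left, hTcapp]
      have h2 : Tendsto (fun k => ⟪z, T (V k)⟫) atTop (𝓝 ⟪z, T vv⟫) := by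
        have h3 := hVweak (ContinuousLinearMap.adjoint Tc z)
        rw [show ⟪z, T vv⟫ = ⟪vv, ContinuousLinearMap.adjoint Tc z⟫ from (h4 vv).symm]
        exact h3.congr fun k => h4 _
      exact tendsto_nhds_unique h2 h1
    have h6 : ⟪T vv - w, T vv - w⟫ = (0:ℝ) := by
      rw [inner_sub_right, inner_sub_left, inner_sub_left]
      have h7 := hz w
      have h8 := hz (T vv)
      linarith
    rw [inner_self_eq_zero] at h6
    exact sub_eq_zero.mp h6
  -- 1 = α‖w⁺‖² + β‖w⁻‖²
  have hSV : Tendsto (fun k => S k (V k)) atTop (𝓝 0) := by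
    apply squeeze_zero_norm' ?_ (Tendsto.div_atTop
      (tendsto_const_nhds (x := 1 + (M0 + ‖h‖) * CT)) hRtop)
    filter_upwards [hgN] with k hk
    calc |S k (V k)| ≤ (1 + (M0 + ‖h‖) * CT) * ‖V k‖ / R k := hSb (V k) k hk
      _ = (1 + (M0 + ‖h‖) * CT) / R k := by
        rw [show ‖V k‖ = 1 from hv1 (σ k), mul_one]
  have hSVeq : ∀ k, S k (V k) = 1 - α * ⟪Lp.posPart (T (V k)), T (V k)⟫
      + β * ⟪Lp.negPart (T (V k)), T (V k)⟫ := by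
    intro k
    simp only [hSdef]
    rw [real_inner_self_eq_norm_sq, show ‖V k‖ = 1 from hv1 (σ k)]
    ring
  have hSV2 : Tendsto (fun k => S k (V k)) atTop
      (𝓝 (1 - α * ⟪Lp.posPart w, w⟫ + β * ⟪Lp.negPart w, w⟫)) := by
    have hp : Tendsto (fun k => ⟪Lp.posPart (T (V k)), T (V k)⟫) atTop
        (𝓝 ⟪Lp.posPart w, w⟫) :=
      Tendsto.inner ((Lp.continuous_posPart.tendsto w).comp hTV) hTV
    have hn : Tendsto (fun k => ⟪Lp.negPart (T (V k)), T (V k)⟫) atTop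
        (𝓝 ⟪Lp.negPart w, w⟫) :=
      Tendsto.inner ((Lp.continuous_negPart.tendsto w).comp hTV) hTV
    have hlim := ((tendsto_const_nhds (x := (1:ℝ))).sub (hp.const_mul α)).add
      (hn.const_mul β)
    exact hlim.congr fun k => (hSVeq k).symm
  have hkey : 1 - α * ⟪Lp.posPart w, w⟫ + β * ⟪Lp.negPart w, w⟫ = 0 :=
    tendsto_nhds_unique hSV2 hSV
  have hw0 : w ≠ 0 := by
    rintro rfl
    rw [myPosPart_zero, myNegPart_zero] at hkey
    simp at hkey
  have hvv0 : vv ≠ 0 := by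
    intro hvveq
    rw [hvveq, map_zero] at hTvv
    exact hw0 hTvv.symm
  exact hnotspec ⟨vv, hvv0, fun φ => by rw [hvv φ, hTvv]⟩
end

section
/- Let (α,β) ∈ ℝ² and let (u_j) be a bounded sequence in X₀ such that sup{|⟨E_{α,β}'(u_j), φ⟩| : φ ∈ X₀, ‖φ‖ = 1} → 0 as j → ∞. Then there exists u₀ ∈ X₀ such that, up to a subsequence, ‖u_j − u₀‖ → 0 as j → ∞. -/
open MeasureTheory RealInnerProductSpace Filter Topology

set_option maxHeartbeats 1000000 in
theorem stmt_17
    {n : ℕ} {s : ℝ} (hs0 : 0 < s) (hs1 : s < 1) (hns : 2 * s < (n : ℝ))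
    {Ωs : Set (EuclideanSpace ℝ (Fin n))} (hΩb : Bornology.IsBounded Ωs)
    (hΩm : MeasurableSet Ωs)
    {K : EuclideanSpace ℝ (Fin n) → ℝ} (hKpos : ∀ x, x ≠ 0 → 0 < K x)
    (hK1 : Integrable (fun x => min (‖x‖ ^ 2) 1 * K x))
    (hK2 : ∃ lam > 0, ∀ x, x ≠ 0 → lam * ‖x‖ ^ (-((n : ℝ) + 2 * s)) ≤ K x)
    (hK3 : ∀ x, K (-x) = K x)
    {X₀ : Type*} [NormedAddCommGroup X₀] [InnerProductSpace ℝ X₀] [CompleteSpace X₀]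
    (T : X₀ →ₗ[ℝ] Lp ℝ 2 (volume.restrict Ωs)) (hT : Function.Injective T)
    (f : ℝ → ℝ) (hfc : Continuous f) (hfb : ∃ Mf : ℝ, ∀ t : ℝ, |f t| ≤ Mf)
    (h : Lp ℝ 2 (volume.restrict Ωs))
    (hcpt : ∀ (u : ℕ → X₀) (C : ℝ), (∀ j, ‖u j‖ ≤ C) →
      ∃ (w : Lp ℝ 2 (volume.restrict Ωs)) (σ : ℕ → ℕ), StrictMono σ ∧
        Tendsto (fun j => ‖T (u (σ j)) - w‖) atTop (nhds 0))
    {α β : ℝ}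
    (u : ℕ → X₀) (hb : ∃ C : ℝ, ∀ j, ‖u j‖ ≤ C)
    (hPS : ∀ ε > 0, ∃ N : ℕ, ∀ j ≥ N, ∀ φ : X₀, ‖φ‖ = 1 → |DEfun T f h α β (u j) φ| ≤ ε)
    :
    ∃ (u₀ : X₀) (σ : ℕ → ℕ), StrictMono σ ∧
      Tendsto (fun j => ‖u (σ j) - u₀‖) atTop (nhds 0) := by
  classical
  haveI : IsFiniteMeasure (volume.restrict Ωs) := by
    constructor
    rw [Measure.restrict_apply_univ]
    exact hΩb.measure_lt_top
  obtain ⟨Mf, hMf⟩ := hfb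
  have hMf0 : 0 ≤ Mf := le_trans (abs_nonneg _) (hMf 0)
  obtain ⟨C, hC⟩ := hb
  -- `T` is a bounded operator
  have hTbdd : ∃ Ct : ℝ, 0 ≤ Ct ∧ ∀ v : X₀, ‖T v‖ ≤ Ct * ‖v‖ := by
    by_contra hcon
    push_neg at hcon
    have key : ∀ j : ℕ, ∃ v : X₀, (j : ℝ) * ‖v‖ < ‖T v‖ := by
      intro j
      obtain ⟨v, hv⟩ := hcon j (Nat.cast_nonneg j)
      exact ⟨v, hv⟩
    choose v hv using key
    have hvne : ∀ j, v j ≠ 0 := by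
      intro j hj0
      have := hv j
      rw [hj0] at this
      simp at this
    set wseq : ℕ → X₀ := fun j => ‖v j‖⁻¹ • v j with hwseq
    have hw1 : ∀ j, ‖wseq j‖ = 1 := by
      intro j
      have hpos : 0 < ‖v j‖ := norm_pos_iff.mpr (hvne j)
      rw [hwseq]
      simp only [norm_smul, norm_inv, norm_norm]
      field_simp
    have hTw : ∀ j : ℕ, (j : ℝ) < ‖T (wseq j)‖ := by
      intro j
      have hpos : 0 < ‖v j‖ := norm_pos_iff.mpr (hvne j)
      have hTeq : T (wseq j) = ‖v j‖⁻¹ • T (v j) := _root_.map_smul T _ _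
      rw [hTeq, norm_smul, norm_inv, norm_norm, inv_mul_eq_div, lt_div_iff₀ hpos]
      exact hv j
    obtain ⟨wl, σ0, hσ0, hconv0⟩ := hcpt wseq 1 (fun j => le_of_eq (hw1 j))
    have hbdd : ∀ᶠ j in atTop, ‖T (wseq (σ0 j)) - wl‖ < 1 :=
      hconv0.eventually (eventually_lt_nhds one_pos)
    obtain ⟨N, hN⟩ := eventually_atTop.mp hbdd
    set j0 : ℕ := max N (Nat.ceil (1 + ‖wl‖) + 1) with hj0def
    have h1 : ‖T (wseq (σ0 j0)) - wl‖ < 1 := hN j0 (le_max_left _ _)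
    have h2 : ‖T (wseq (σ0 j0))‖ ≤ 1 + ‖wl‖ := by
      have := norm_sub_norm_le (T (wseq (σ0 j0))) wl
      linarith
    have h3 : (j0 : ℝ) < 1 + ‖wl‖ := lt_of_lt_of_le (hTw (σ0 j0)) h2 |>.trans_le' (by
      exact_mod_cast Nat.cast_le.mpr (hσ0.le_apply))
    have h4 : (1 + ‖wl‖) ≤ (j0 : ℝ) := by
      have : Nat.ceil (1 + ‖wl‖) + 1 ≤ j0 := le_max_right _ _
      calc (1 + ‖wl‖) ≤ (Nat.ceil (1 + ‖wl‖) : ℝ) := Nat.le_ceil _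
        _ ≤ (j0 : ℝ) := by exact_mod_cast le_trans (Nat.le_succ _) this
    linarith
  obtain ⟨Ct, hCt0, hCt⟩ := hTbdd
  -- membership of `f ∘ F` in `L²`
  have hmeas : ∀ F : Lp ℝ 2 (volume.restrict Ωs), MemLp (fun x => f (F x)) 2 (volume.restrict Ωs) := by
    intro F
    refine MemLp.of_bound (hfc.comp_aestronglyMeasurable (Lp.aestronglyMeasurable F)) Mf ?_
    exact Eventually.of_forall fun x => by simpa [Real.norm_eq_abs] using hMf (F x)
  set G : X₀ → Lp ℝ 2 (volume.restrict Ωs) := fun v0 => (hmeas (T v0)).toLp _ with hG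
  -- real inner product on L² is the integral of the product
  have hinner : ∀ F F' : Lp ℝ 2 (volume.restrict Ωs), ⟪F, F'⟫ = ∫ x, F x * F' x ∂(volume.restrict Ωs) := by
    intro F F'
    rw [L2.inner_def]
    simp [RCLike.inner_apply, mul_comm]
  -- the key identity for the derivative pairing
  have hDE : ∀ v φ : X₀, ⟪v, φ⟫ = DEfun T f h α β v φ
      + α * ⟪Lp.posPart (T v), T φ⟫ - β * ⟪Lp.negPart (T v), T φ⟫
      + ⟪G v + h, T φ⟫ := by
    intro v φ
    have hint : ∫ x, (f ((T v) x) + h x) * (T φ) x ∂(volume.restrict Ωs) = ⟪G v + h, T φ⟫ := by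
      rw [hinner]
      apply integral_congr_ae
      filter_upwards [Lp.coeFn_add (G v) h, (hmeas (T v)).coeFn_toLp] with x hx1 hx2
      rw [hx1]
      simp only [Pi.add_apply]
      rw [hx2]
    simp only [DEfun, DJfun]
    rw [hint]
    ring
  -- Lipschitz estimates for positive and negative parts
  have hpos : ∀ a b : Lp ℝ 2 (volume.restrict Ωs), ‖Lp.posPart a - Lp.posPart b‖ ≤ ‖a - b‖ := by
    intro a b
    have := Lp.lipschitzWith_pos_part.norm_compLp_sub_le (max_eq_right le_rfl) a b
    simpa [Lp.posPart] using this
  have hneg : ∀ a b : Lp ℝ 2 (volume.restrict Ωs), ‖Lp.negPart a - Lp.negPart b‖ ≤ ‖a - b‖ := by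
    intro a b
    calc ‖Lp.negPart a - Lp.negPart b‖ = ‖Lp.posPart (-a) - Lp.posPart (-b)‖ := rfl
      _ ≤ ‖-a - -b‖ := hpos _ _
      _ = ‖a - b‖ := by rw [neg_sub_neg]; exact norm_sub_rev b a
  -- compactness: extract a subsequence converging in L² and a.e.
  obtain ⟨w, σ, hσ, hTc⟩ := hcpt u C hC
  have hLp : Tendsto (fun j => T (u (σ j))) atTop (𝓝 w) :=
    tendsto_iff_norm_sub_tendsto_zero.mpr hTc
  have hIM := tendstoInMeasure_of_tendsto_Lp hLp
  obtain ⟨τ, hτ, hae⟩ := hIM.exists_seq_tendsto_ae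
  set ρ : ℕ → ℕ := fun j => σ (τ j) with hρ
  have hρmono : StrictMono ρ := hσ.comp hτ
  have hTρ : Tendsto (fun j => ‖T (u (ρ j)) - w‖) atTop (𝓝 0) :=
    hTc.comp hτ.tendsto_atTop
  -- convergence of `G (u (ρ j))` in L²
  set Gw : Lp ℝ 2 (volume.restrict Ωs) := (hmeas w).toLp _ with hGw
  have hnormsq : ∀ F : Lp ℝ 2 (volume.restrict Ωs), ‖F‖ = Real.sqrt (∫ x, F x * F x ∂(volume.restrict Ωs)) := by
    intro F
    have : ∫ x, F x * F x ∂(volume.restrict Ωs) = ‖F‖ * ‖F‖ := by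
      rw [← hinner]; exact real_inner_self_eq_norm_mul_norm F
    rw [this, Real.sqrt_mul_self (norm_nonneg F)]
  set q : ℕ → ℝ := fun j => ∫ x, (f ((T (u (ρ j))) x) - f (w x)) * (f ((T (u (ρ j))) x) - f (w x)) ∂(volume.restrict Ωs) with hq
  have hq0 : Tendsto q atTop (𝓝 0) := by
    have h0 : (0 : ℝ) = ∫ _x, (0 : ℝ) ∂(volume.restrict Ωs) := by simp
    rw [h0]
    apply tendsto_integral_of_dominated_convergence (bound := fun _ => (2 * Mf) * (2 * Mf))
    · intro j
      have h1 := hfc.comp_aestronglyMeasurable (Lp.aestronglyMeasurable (T (u (ρ j))))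
      have h2 := hfc.comp_aestronglyMeasurable (Lp.aestronglyMeasurable w)
      exact (h1.sub h2).mul (h1.sub h2)
    · exact integrable_const _
    · intro j
      refine Eventually.of_forall fun x => ?_
      have ha := hMf ((T (u (ρ j))) x)
      have hb' := hMf (w x)
      have habs : |f ((T (u (ρ j))) x) - f (w x)| ≤ 2 * Mf := by
        calc |f ((T (u (ρ j))) x) - f (w x)|
            ≤ |f ((T (u (ρ j))) x)| + |f (w x)| := abs_sub _ _
          _ ≤ 2 * Mf := by linarith
      rw [Real.norm_eq_abs, abs_mul]
      exact mul_le_mul habs habs (abs_nonneg _) (by linarith)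
    · filter_upwards [hae] with x hx
      have ht : Tendsto (fun j => f ((T (u (ρ j))) x)) atTop (𝓝 (f (w x))) :=
        (hfc.tendsto (w x)).comp hx
      have h0 : Tendsto (fun _ : ℕ => f (w x)) atTop (𝓝 (f (w x))) := tendsto_const_nhds
      have := (ht.sub h0).mul (ht.sub h0)
      simpa using this
  have hqeq : ∀ j, ‖G (u (ρ j)) - Gw‖ = Real.sqrt (q j) := by
    intro j
    rw [hnormsq]
    congr 1
    apply integral_congr_ae
    filter_upwards [Lp.coeFn_sub (G (u (ρ j))) Gw, (hmeas (T (u (ρ j)))).coeFn_toLp,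
      (hmeas w).coeFn_toLp] with x hx1 hx2 hx3
    rw [hx1]
    simp only [Pi.sub_apply]
    rw [hx2, hx3]
  have hgconv : Tendsto (fun j => ‖G (u (ρ j)) - Gw‖) atTop (𝓝 0) := by
    have : Tendsto (fun j => Real.sqrt (q j)) atTop (𝓝 (Real.sqrt 0)) :=
      (Real.continuous_sqrt.tendsto 0).comp hq0
    rw [Real.sqrt_zero] at this
    simpa only [hqeq] using this
  -- the sequence `u ∘ ρ` is Cauchy
  have hcauchy : CauchySeq (fun j => u (ρ j)) := by
    rw [Metric.cauchySeq_iff]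
    intro ε hε
    set A : ℝ := |α| + |β| + 1 with hA
    have hA1 : 1 ≤ A := by
      rw [hA]
      have := abs_nonneg α
      have := abs_nonneg β
      linarith
    have hA0 : 0 < A := by linarith
    set δ : ℝ := ε / (6 * (Ct + 1) * A) with hδ
    have hδ0 : 0 < δ := by positivity
    obtain ⟨N₁, hN₁⟩ := hPS (ε / 6) (by positivity)
    obtain ⟨N₂, hN₂⟩ := eventually_atTop.mp (hTρ.eventually (eventually_lt_nhds hδ0))
    obtain ⟨N₃, hN₃⟩ := eventually_atTop.mp (hgconv.eventually (eventually_lt_nhds hδ0))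
    refine ⟨max N₁ (max N₂ N₃), fun m hm k hk => ?_⟩
    have hm1 : N₁ ≤ m := le_trans (le_max_left _ _) hm
    have hk1 : N₁ ≤ k := le_trans (le_max_left _ _) hk
    have hm2 : N₂ ≤ m := le_trans (le_trans (le_max_left _ _) (le_max_right _ _)) hm
    have hk2 : N₂ ≤ k := le_trans (le_trans (le_max_left _ _) (le_max_right _ _)) hk
    have hm3 : N₃ ≤ m := le_trans (le_trans (le_max_right _ _) (le_max_right _ _)) hm
    have hk3 : N₃ ≤ k := le_trans (le_trans (le_max_right _ _) (le_max_right _ _)) hk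
    set d : X₀ := u (ρ m) - u (ρ k) with hd
    rw [dist_eq_norm, ← hd]
    by_cases hd0 : d = 0
    · rw [hd0, norm_zero]; exact hε
    · set φ : X₀ := ‖d‖⁻¹ • d with hφdef
      have hdpos : 0 < ‖d‖ := norm_pos_iff.mpr hd0
      have hφ1 : ‖φ‖ = 1 := by
        rw [hφdef, norm_smul, norm_inv, norm_norm]
        field_simp
      have hinnerd : ⟪d, φ⟫ = ‖d‖ := by
        rw [hφdef, real_inner_smul_right, real_inner_self_eq_norm_mul_norm]
        field_simp
      -- the main identity
      have hmain : ⟪d, φ⟫ = (DEfun T f h α β (u (ρ m)) φ - DEfun T f h α β (u (ρ k)) φ)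
          + α * ⟪Lp.posPart (T (u (ρ m))) - Lp.posPart (T (u (ρ k))), T φ⟫
          - β * ⟪Lp.negPart (T (u (ρ m))) - Lp.negPart (T (u (ρ k))), T φ⟫
          + ⟪G (u (ρ m)) - G (u (ρ k)), T φ⟫ := by
        rw [hd, inner_sub_left, hDE (u (ρ m)) φ, hDE (u (ρ k)) φ]
        simp only [inner_sub_left, inner_add_left]
        ring
      have hTφ : ‖T φ‖ ≤ Ct := by
        have := hCt φ
        rwa [hφ1, mul_one] at this
      -- bounds on the individual terms
      have hDEm : |DEfun T f h α β (u (ρ m)) φ| ≤ ε / 6 :=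
        hN₁ (ρ m) (le_trans hm1 (hρmono.le_apply)) φ hφ1
      have hDEk : |DEfun T f h α β (u (ρ k)) φ| ≤ ε / 6 :=
        hN₁ (ρ k) (le_trans hk1 (hρmono.le_apply)) φ hφ1
      have hTmk : ‖T (u (ρ m)) - T (u (ρ k))‖ ≤ 2 * δ := by
        calc ‖T (u (ρ m)) - T (u (ρ k))‖
            ≤ ‖T (u (ρ m)) - w‖ + ‖T (u (ρ k)) - w‖ := by
              have heq : T (u (ρ m)) - T (u (ρ k)) = (T (u (ρ m)) - w) - (T (u (ρ k)) - w) := by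
                abel
              rw [heq]
              exact norm_sub_le _ _
          _ ≤ δ + δ := add_le_add (le_of_lt (hN₂ m hm2)) (le_of_lt (hN₂ k hk2))
          _ = 2 * δ := by ring
      have hGmk : ‖G (u (ρ m)) - G (u (ρ k))‖ ≤ 2 * δ := by
        calc ‖G (u (ρ m)) - G (u (ρ k))‖
            ≤ ‖G (u (ρ m)) - Gw‖ + ‖G (u (ρ k)) - Gw‖ := by
              have heq : G (u (ρ m)) - G (u (ρ k)) = (G (u (ρ m)) - Gw) - (G (u (ρ k)) - Gw) := by
                abel
              rw [heq]
              exact norm_sub_le _ _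
          _ ≤ δ + δ := add_le_add (le_of_lt (hN₃ m hm3)) (le_of_lt (hN₃ k hk3))
          _ = 2 * δ := by ring
      have hPmk : ‖Lp.posPart (T (u (ρ m))) - Lp.posPart (T (u (ρ k)))‖ ≤ 2 * δ :=
        le_trans (hpos _ _) hTmk
      have hNmk : ‖Lp.negPart (T (u (ρ m))) - Lp.negPart (T (u (ρ k)))‖ ≤ 2 * δ :=
        le_trans (hneg _ _) hTmk
      have hbound : ‖d‖ ≤ ε / 6 + ε / 6 + |α| * (2 * δ * Ct) + |β| * (2 * δ * Ct)
          + 2 * δ * Ct := by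
        rw [← hinnerd, hmain]
        have e1 : |α * ⟪Lp.posPart (T (u (ρ m))) - Lp.posPart (T (u (ρ k))), T φ⟫|
            ≤ |α| * (2 * δ * Ct) := by
          rw [abs_mul]
          refine mul_le_mul_of_nonneg_left ?_ (abs_nonneg α)
          calc |⟪Lp.posPart (T (u (ρ m))) - Lp.posPart (T (u (ρ k))), T φ⟫|
              ≤ ‖Lp.posPart (T (u (ρ m))) - Lp.posPart (T (u (ρ k)))‖ * ‖T φ‖ :=
                abs_real_inner_le_norm _ _
            _ ≤ (2 * δ) * Ct := mul_le_mul hPmk hTφ (norm_nonneg _) (by positivity)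
            _ = 2 * δ * Ct := by ring
        have e2 : |β * ⟪Lp.negPart (T (u (ρ m))) - Lp.negPart (T (u (ρ k))), T φ⟫|
            ≤ |β| * (2 * δ * Ct) := by
          rw [abs_mul]
          refine mul_le_mul_of_nonneg_left ?_ (abs_nonneg β)
          calc |⟪Lp.negPart (T (u (ρ m))) - Lp.negPart (T (u (ρ k))), T φ⟫|
              ≤ ‖Lp.negPart (T (u (ρ m))) - Lp.negPart (T (u (ρ k)))‖ * ‖T φ‖ :=
                abs_real_inner_le_norm _ _
            _ ≤ (2 * δ) * Ct := mul_le_mul hNmk hTφ (norm_nonneg _) (by positivity)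
            _ = 2 * δ * Ct := by ring
        have e3 : |⟪G (u (ρ m)) - G (u (ρ k)), T φ⟫| ≤ 2 * δ * Ct := by
          calc |⟪G (u (ρ m)) - G (u (ρ k)), T φ⟫|
              ≤ ‖G (u (ρ m)) - G (u (ρ k))‖ * ‖T φ‖ := abs_real_inner_le_norm _ _
            _ ≤ (2 * δ) * Ct := mul_le_mul hGmk hTφ (norm_nonneg _) (by positivity)
            _ = 2 * δ * Ct := by ring
        have := abs_sub (α * ⟪Lp.posPart (T (u (ρ m))) - Lp.posPart (T (u (ρ k))), T φ⟫)
          (β * ⟪Lp.negPart (T (u (ρ m))) - Lp.negPart (T (u (ρ k))), T φ⟫)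
        calc (DEfun T f h α β (u (ρ m)) φ - DEfun T f h α β (u (ρ k)) φ)
            + α * ⟪Lp.posPart (T (u (ρ m))) - Lp.posPart (T (u (ρ k))), T φ⟫
            - β * ⟪Lp.negPart (T (u (ρ m))) - Lp.negPart (T (u (ρ k))), T φ⟫
            + ⟪G (u (ρ m)) - G (u (ρ k)), T φ⟫
            ≤ |DEfun T f h α β (u (ρ m)) φ| + |DEfun T f h α β (u (ρ k)) φ|
              + |α * ⟪Lp.posPart (T (u (ρ m))) - Lp.posPart (T (u (ρ k))), T φ⟫|
              + |β * ⟪Lp.negPart (T (u (ρ m))) - Lp.negPart (T (u (ρ k))), T φ⟫|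
              + |⟪G (u (ρ m)) - G (u (ρ k)), T φ⟫| := by
                have l1 := abs_le.mp (le_refl |DEfun T f h α β (u (ρ m)) φ|)
                have a1 := le_abs_self (DEfun T f h α β (u (ρ m)) φ)
                have a2 := neg_abs_le (DEfun T f h α β (u (ρ k)) φ)
                have a3 := le_abs_self (α * ⟪Lp.posPart (T (u (ρ m))) - Lp.posPart (T (u (ρ k))), T φ⟫)
                have a4 := neg_abs_le (β * ⟪Lp.negPart (T (u (ρ m))) - Lp.negPart (T (u (ρ k))), T φ⟫)
                have a5 := le_abs_self (⟪G (u (ρ m)) - G (u (ρ k)), T φ⟫)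
                linarith
          _ ≤ ε / 6 + ε / 6 + |α| * (2 * δ * Ct) + |β| * (2 * δ * Ct) + 2 * δ * Ct := by
                linarith
      have harith : |α| * (2 * δ * Ct) + |β| * (2 * δ * Ct) + 2 * δ * Ct ≤ ε / 3 := by
        have hcalc : |α| * (2 * δ * Ct) + |β| * (2 * δ * Ct) + 2 * δ * Ct
            = A * (2 * δ * Ct) := by rw [hA]; ring
        rw [hcalc, hδ]
        have hAne : A ≠ 0 := ne_of_gt hA0
        have hCt1 : (0:ℝ) < Ct + 1 := by linarith
        have heq2 : A * (2 * (ε / (6 * (Ct + 1) * A)) * Ct) = ε * Ct / (3 * (Ct + 1)) := by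
          field_simp
          ring
        rw [heq2, div_le_div_iff₀ (by positivity) (by norm_num : (0:ℝ) < 3)]
        nlinarith [mul_nonneg hε.le hCt0]
      calc ‖d‖ ≤ ε / 6 + ε / 6 + (|α| * (2 * δ * Ct) + |β| * (2 * δ * Ct) + 2 * δ * Ct) := by
              linarith
        _ ≤ ε / 6 + ε / 6 + ε / 3 := by linarith
        _ < ε := by linarith
  obtain ⟨u₀, hu₀⟩ := cauchySeq_tendsto_of_complete hcauchy
  exact ⟨u₀, ρ, hρmono, tendsto_iff_norm_sub_tendsto_zero.mp hu₀⟩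
end
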